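/- arXiv:1305.4704 — 4 statements merged into one kernel-verified Lean document; each statement's English description precedes it below -/
import Mathlib

section
/- Let {(x^t, y^t, z^t)} be generated by the proximal AMA, suppose assumption A1 holds, and suppose β>0, T ⪰ 0 and γ>0 are chosen so that (i) Σ_g + T + βB*B ≻ 0 and (ii) for some positive μ, δ, σ one has 2Σ_f − (β+μ)A*A ⪰ δI and γ + σ ≤ 1 + min{β,μ}/(2β). Let (x̄, ȳ, z̄) be the limit of {(x^t, y^t, z^t)} and define (x̄^N, ȳ^N) = (1/N)Σ_{t=1}^N (x^t, y^t). Then f(x̄^N) + g(ȳ^N) − f(x̄) − g(ȳ) ≥ −(‖z̄‖/√(Nσβ)) · √((1/(γβ))‖z⁰ − z̄‖² + ‖y⁰ − ȳ‖²_T). -/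
open RealInnerProductSpace Filter Topology

/-- `v` is a subgradient of the extended-real-valued function `f` at `x`. -/
def IsSubgradAt {E : Type*} [NormedAddCommGroup E] [InnerProductSpace ℝ E]
    (f : E → EReal) (v x : E) : Prop :=
  ∀ u, f x + ((⟪v, u - x⟫ : ℝ) : EReal) ≤ f u

lemma ereal_top_not_le_coe (b : ℝ) : ¬ ((⊤ : EReal) ≤ (b : EReal)) := by
  simp

lemma ereal_shift {a b : EReal} (hb : b ≠ ⊥) (r s : ℝ)
    (h : a + (r : EReal) ≤ b + (s : EReal)) : a + ((r - s : ℝ) : EReal) ≤ b := by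
  rcases eq_or_ne b ⊤ with rfl | hbt
  · exact le_top
  rcases eq_or_ne a ⊥ with rfl | hab
  · simp
  rcases eq_or_ne a ⊤ with rfl | hat
  · exfalso
    rw [EReal.top_add_coe] at h
    lift b to ℝ using ⟨hbt, hb⟩
    rw [← EReal.coe_add] at h
    exact ereal_top_not_le_coe _ h
  · lift a to ℝ using ⟨hat, hab⟩
    lift b to ℝ using ⟨hbt, hb⟩
    rw [← EReal.coe_add, ← EReal.coe_add, EReal.coe_le_coe_iff] at h
    rw [← EReal.coe_add, EReal.coe_le_coe_iff]
    linarith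

lemma ereal_ne_top_of_le {a b : EReal} (r s : ℝ) (hb : b ≠ ⊤) (hbbot : b ≠ ⊥)
    (h : a + (r : EReal) ≤ b + (s : EReal)) : a ≠ ⊤ := by
  intro ha
  subst ha
  rw [EReal.top_add_coe] at h
  lift b to ℝ using ⟨hb, hbbot⟩
  rw [← EReal.coe_add] at h
  exact ereal_top_not_le_coe _ h

lemma sum_Icc_one {M : Type*} [AddCommMonoid M] (n : ℕ) (f : ℕ → M) :
    ∑ i ∈ Finset.Icc 1 n, f i = ∑ i ∈ Finset.range n, f (i + 1) := by
  rw [← Finset.Ico_add_one_right_eq_Icc, Finset.sum_Ico_eq_sum_range]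
  simp [Nat.add_comm]

lemma gsub_aux {Y Z : Type*}
    [NormedAddCommGroup Y] [InnerProductSpace ℝ Y]
    [NormedAddCommGroup Z] [InnerProductSpace ℝ Z] [CompleteSpace Y] [CompleteSpace Z]
    (g : Y → EReal) (hg_ne_bot : ∀ y, g y ≠ ⊥)
    (hg_cvx : ∀ (y₁ y₂ : Y) (a b : ℝ), 0 ≤ a → 0 ≤ b → a + b = 1 →
      g (a • y₁ + b • y₂) ≤ (a : EReal) * g y₁ + (b : EReal) * g y₂)
    (B : Y →L[ℝ] Z) (T : Y →L[ℝ] Y)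
    (hT_sa : ∀ u v : Y, ⟪T u, v⟫ = ⟪u, T v⟫) (hT_psd : ∀ y : Y, 0 ≤ ⟪y, T y⟫)
    (β : ℝ) (hβ : 0 < β) (zt w : Z) (y0 yp : Y)
    (hmin : ∀ y' : Y,
      g yp + ((-⟪zt, B yp⟫ + β / 2 * ‖B yp + w‖ ^ 2
          + 1 / 2 * ⟪yp - y0, T (yp - y0)⟫ : ℝ) : EReal)
        ≤ g y' + ((-⟪zt, B y'⟫ + β / 2 * ‖B y' + w‖ ^ 2
          + 1 / 2 * ⟪y' - y0, T (y' - y0)⟫ : ℝ) : EReal))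
    (hpt : g yp ≠ ⊤) :
    IsSubgradAt g (ContinuousLinearMap.adjoint B zt
      - β • ContinuousLinearMap.adjoint B (B yp + w) - T (yp - y0)) yp := by
  intro u
  rcases eq_or_ne (g u) ⊤ with hu | hu
  · rw [hu]; exact le_top
  lift g yp to ℝ using ⟨hpt, hg_ne_bot yp⟩ with Gp hGp
  lift g u to ℝ using ⟨hu, hg_ne_bot u⟩ with U hU
  set v : Y := ContinuousLinearMap.adjoint B zt
      - β • ContinuousLinearMap.adjoint B (B yp + w) - T (yp - y0) with hv
  set d : Y := u - yp with hd
  rw [← EReal.coe_add, EReal.coe_le_coe_iff]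
  -- key claim: ∀ λ ∈ (0,1], Gp ≤ U - ⟪v,d⟫ + λ * Q
  set Q : ℝ := β / 2 * ‖B d‖ ^ 2 + 1 / 2 * ⟪d, T d⟫ with hQ
  have hQ0 : 0 ≤ Q := by
    have := hT_psd d
    have : (0:ℝ) ≤ β / 2 * ‖B d‖ ^ 2 := by positivity
    have := hT_psd d
    unfold Q; nlinarith
  have key : ∀ lam : ℝ, 0 < lam → lam ≤ 1 → Gp + ⟪v, d⟫ ≤ U + lam * Q := by
    intro lam hl0 hl1
    have hcomb : ((1 - lam) • yp + lam • u) = yp + lam • d := by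
      rw [hd]; rw [smul_sub]; module
    have h1 := hmin (yp + lam • d)
    have h2 := hg_cvx yp u (1 - lam) lam (by linarith) (by linarith) (by ring)
    rw [hcomb, ← hGp, ← hU] at h2
    rw [← EReal.coe_mul, ← EReal.coe_mul, ← EReal.coe_add] at h2
    -- combine: Gp + E⁺ ≤ g(yλ) + Eλ ≤ ((1-lam)Gp + lam U) + Eλ
    have h3 := h1.trans (add_le_add_left h2 _)
    rw [← EReal.coe_add, ← EReal.coe_add, EReal.coe_le_coe_iff] at h3
    -- now expand the quadratics
    have eB : B (yp + lam • d) = B yp + lam • B d := by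
      simp [map_add, map_smul]
    have eN : ‖B (yp + lam • d) + w‖ ^ 2
        = ‖B yp + w‖ ^ 2 + 2 * lam * ⟪B yp + w, B d⟫ + lam ^ 2 * ‖B d‖ ^ 2 := by
      rw [eB]
      have : B yp + lam • B d + w = (B yp + w) + lam • B d := by abel
      rw [this, norm_add_sq_real, inner_smul_right, norm_smul]
      simp [mul_pow, abs_of_pos hl0]
      ring
    have eT : ⟪yp + lam • d - y0, T (yp + lam • d - y0)⟫
        = ⟪yp - y0, T (yp - y0)⟫ + 2 * lam * ⟪T (yp - y0), d⟫ + lam ^ 2 * ⟪d, T d⟫ := by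
      have h' : yp + lam • d - y0 = (yp - y0) + lam • d := by abel
      have hsa : ⟪yp - y0, T d⟫ = ⟪T (yp - y0), d⟫ := (hT_sa (yp - y0) d).symm
      have hc : ⟪d, T (yp - y0)⟫ = ⟪T (yp - y0), d⟫ := real_inner_comm _ _
      rw [h']
      simp only [map_add, map_smul, inner_add_left, inner_add_right,
        real_inner_smul_left, real_inner_smul_right, hsa, hc]
      ring
    have eI : ⟪zt, B (yp + lam • d)⟫ = ⟪zt, B yp⟫ + lam * ⟪zt, B d⟫ := by
      rw [eB, inner_add_right, inner_smul_right]
    rw [eN, eT, eI] at h3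
    -- ⟪v, d⟫ computation
    have hvd : ⟪v, d⟫ = ⟪zt, B d⟫ - β * ⟪B yp + w, B d⟫ - ⟪T (yp - y0), d⟫ := by
      rw [hv]
      rw [inner_sub_left, inner_sub_left, inner_smul_left,
        ContinuousLinearMap.adjoint_inner_left, ContinuousLinearMap.adjoint_inner_left]
      norm_num
    rw [hvd]
    unfold Q
    nlinarith [h3, sq_nonneg lam]
  -- conclude by taking lam → 0
  by_contra hcon
  push_neg at hcon
  set ε : ℝ := Gp + ⟪v, d⟫ - U with hε
  have hε0 : 0 < ε := by unfold ε; linarith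
  have hl := key (min 1 (ε / (2 * (Q + 1)))) (by positivity) (min_le_left _ _)
  have h5 : min 1 (ε / (2 * (Q + 1))) * Q ≤ (ε / (2 * (Q + 1))) * Q :=
    mul_le_mul_of_nonneg_right (min_le_right _ _) hQ0
  have h6 : (ε / (2 * (Q + 1))) * Q < ε := by
    rw [div_mul_eq_mul_div, div_lt_iff₀ (by positivity)]
    nlinarith
  linarith

set_option maxHeartbeats 1000000 in

lemma step_ineq {Z Y : Type*}
    [NormedAddCommGroup Z] [InnerProductSpace ℝ Z]
    [NormedAddCommGroup Y] [InnerProductSpace ℝ Y]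
    (T : Y →L[ℝ] Y)
    (hT_sa : ∀ u v : Y, ⟪T u, v⟫ = ⟪u, T v⟫) (hT_psd : ∀ y : Y, 0 ≤ ⟪y, T y⟫)
    (β γ σ μ : ℝ) (hβ : 0 < β) (hγ : 0 < γ) (hσ : 0 < σ) (hμ : 0 < μ)
    (hcond3 : γ + σ ≤ 1 + min β μ / (2 * β))
    (u r a : Z) (q dy : Y) (S : ℝ)
    (h1 : S ≤ ⟪u, a⟫)
    (h2 : 0 ≤ ⟪u, r - a⟫ - β * ⟪r, r - a⟫ - ⟪T (dy - q), dy⟫)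
    (hS2 : (β + μ) * ‖a‖ ^ 2 ≤ 2 * S) :
    σ * β * ‖r‖ ^ 2
      ≤ 1 / (γ * β) * ‖u‖ ^ 2 + ⟪q, T q⟫
        - 1 / (γ * β) * ‖u - (γ * β) • r‖ ^ 2 - ⟪dy, T dy⟫ := by
  obtain ⟨m, hm⟩ : ∃ m, m = min β μ := ⟨_, rfl⟩
  rw [← hm] at hcond3
  have hmβ : m ≤ β := hm ▸ min_le_left _ _
  have hmμ : m ≤ μ := hm ▸ min_le_right _ _
  have hm0 : 0 < m := hm ▸ lt_min hβ hμ
  clear hm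
  have hs0 : 0 < β - m / 2 := by linarith
  -- expand the z-norm
  have ez : ‖u - (γ * β) • r‖ ^ 2
      = ‖u‖ ^ 2 - 2 * (γ * β) * ⟪u, r⟫ + (γ * β) ^ 2 * ‖r‖ ^ 2 := by
    rw [norm_sub_sq_real, inner_smul_right, norm_smul]
    simp [mul_pow, abs_of_pos (mul_pos hγ hβ)]
    ring
  -- T identity
  have hqd : ⟪dy, T q⟫ = ⟪q, T dy⟫ := by
    rw [← hT_sa dy q]; exact real_inner_comm _ _
  have eT : 2 * ⟪T (dy - q), dy⟫
      = ⟪dy, T dy⟫ + ⟪dy - q, T (dy - q)⟫ - ⟪q, T q⟫ := by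
    have h1 : ⟪T (dy - q), dy⟫ = ⟪dy - q, T dy⟫ := hT_sa _ _
    have h2 : ⟪dy - q, T (dy - q)⟫
        = ⟪dy, T dy⟫ - ⟪dy, T q⟫ - ⟪q, T dy⟫ + ⟪q, T q⟫ := by
      simp only [map_sub, inner_sub_left, inner_sub_right]
      ring
    have h4 : ⟪dy - q, T dy⟫ = ⟪dy, T dy⟫ - ⟪q, T dy⟫ := by
      simp only [inner_sub_left]
    rw [h1, h2, h4, hqd]
    ring
  have hTp : 0 ≤ ⟪dy - q, T (dy - q)⟫ := hT_psd _
  -- Young's inequality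
  have eY : ‖(β - m / 2) • r - β • a‖ ^ 2
      = (β - m / 2) ^ 2 * ‖r‖ ^ 2 - 2 * (β - m / 2) * β * ⟪r, a⟫ + β ^ 2 * ‖a‖ ^ 2 := by
    rw [norm_sub_sq_real, inner_smul_left, inner_smul_right, norm_smul, norm_smul]
    simp [mul_pow, abs_of_pos hs0, abs_of_pos hβ]
    ring
  have young : 2 * β * ⟪r, a⟫
      ≤ (β - m / 2) * ‖r‖ ^ 2 + β ^ 2 / (β - m / 2) * ‖a‖ ^ 2 := by
    have h0 : 0 ≤ ‖(β - m / 2) • r - β • a‖ ^ 2 := sq_nonneg _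
    rw [eY] at h0
    have key : 0 ≤ ((β - m / 2) * ‖r‖ ^ 2 + β ^ 2 / (β - m / 2) * ‖a‖ ^ 2
        - 2 * β * ⟪r, a⟫) * (β - m / 2) := by
      rw [sub_mul, add_mul, div_mul_eq_mul_div, div_mul_cancel₀ _ hs0.ne']
      nlinarith
    have hE := div_nonneg key hs0.le
    rw [mul_div_cancel_right₀ _ hs0.ne'] at hE
    linarith
  have hβμ : β ^ 2 / (β - m / 2) ≤ β + μ := by
    rw [div_le_iff₀ hs0]
    nlinarith [mul_nonneg (sub_nonneg.2 hmμ) hβ.le, mul_nonneg (sub_nonneg.2 hmβ) hμ.le]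
  have hσ' : σ * β ≤ (1 - γ) * β + m / 2 := by
    have h2β : m / (2 * β) * (2 * β) = m := by field_simp
    nlinarith [mul_le_mul_of_nonneg_right hcond3 (by positivity : (0:ℝ) ≤ 2 * β)]
  have hfield : ∀ A P R tq td : ℝ,
      1 / (γ * β) * A + tq - 1 / (γ * β) * (A - 2 * (γ * β) * P + (γ * β) ^ 2 * R) - td
      = 2 * P - γ * β * R + tq - td := by
    intro A P R tq td
    field_simp
    ring
  rw [ez, hfield]
  simp only [inner_sub_right] at h2
  have hrr : ⟪r, r⟫ = ‖r‖ ^ 2 := real_inner_self_eq_norm_sq r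
  rw [hrr] at h2
  have hA2 : (0:ℝ) ≤ ‖a‖ ^ 2 := sq_nonneg _
  have hR2 : (0:ℝ) ≤ ‖r‖ ^ 2 := sq_nonneg _
  have k1 : 0 ≤ (β + μ - β ^ 2 / (β - m / 2)) * ‖a‖ ^ 2 := mul_nonneg (by linarith) hA2
  have k2 : 0 ≤ ((1 - γ) * β + m / 2 - σ * β) * ‖r‖ ^ 2 := mul_nonneg (by linarith) hR2
  nlinarith [h1, h2, eT, hTp, young, hS2, k1, k2]

set_option maxHeartbeats 1000000

/-- **Iteration complexity of the proximal AMA: lower objective bound (Theorem 3.2,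
lower bound in (fvalbd)).** For the ergodic averages
`(x̄^N, ȳ^N) = (1/N)Σ_{t=1}^N (x^t, y^t)` one has
`f(x̄^N) + g(ȳ^N) − f(x̄) − g(ȳ)
  ≥ −(‖z̄‖/√(Nσβ))·√((1/(γβ))‖z⁰ − z̄‖² + ‖y⁰ − ȳ‖²_T)`. -/
theorem stmt_5
    {X Y Z : Type*}
    [NormedAddCommGroup X] [InnerProductSpace ℝ X] [FiniteDimensional ℝ X]
    [NormedAddCommGroup Y] [InnerProductSpace ℝ Y] [FiniteDimensional ℝ Y]
    [NormedAddCommGroup Z] [InnerProductSpace ℝ Z] [FiniteDimensional ℝ Z]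
    (f : X → EReal) (g : Y → EReal)
    -- `f` and `g` are proper
    (hf_ne_bot : ∀ x, f x ≠ ⊥) (hf_proper : ∃ x, f x ≠ ⊤)
    (hg_ne_bot : ∀ y, g y ≠ ⊥) (hg_proper : ∃ y, g y ≠ ⊤)
    -- `f` and `g` are closed
    (hf_lsc : LowerSemicontinuous f) (hg_lsc : LowerSemicontinuous g)
    -- `f` and `g` are convex
    (hf_cvx : ∀ (x₁ x₂ : X) (a b : ℝ), 0 ≤ a → 0 ≤ b → a + b = 1 →
      f (a • x₁ + b • x₂) ≤ (a : EReal) * f x₁ + (b : EReal) * f x₂)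
    (hg_cvx : ∀ (y₁ y₂ : Y) (a b : ℝ), 0 ≤ a → 0 ≤ b → a + b = 1 →
      g (a • y₁ + b • y₂) ≤ (a : EReal) * g y₁ + (b : EReal) * g y₂)
    (A : X →L[ℝ] Z) (B : Y →L[ℝ] Z) (c : Z)
    (Sf : X →L[ℝ] X) (Sg : Y →L[ℝ] Y) (T : Y →L[ℝ] Y)
    -- `Sf ≻ 0`, `Sg ⪰ 0`, `T ⪰ 0` are self-adjoint
    (hSf_sa : ∀ u v : X, ⟪Sf u, v⟫ = ⟪u, Sf v⟫)
    (hSg_sa : ∀ u v : Y, ⟪Sg u, v⟫ = ⟪u, Sg v⟫)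
    (hT_sa : ∀ u v : Y, ⟪T u, v⟫ = ⟪u, T v⟫)
    (hSf_pd : ∀ x : X, x ≠ 0 → 0 < ⟪x, Sf x⟫)
    (hSg_psd : ∀ y : Y, 0 ≤ ⟪y, Sg y⟫)
    (hT_psd : ∀ y : Y, 0 ≤ ⟪y, T y⟫)
    -- the subdifferential monotonicity conditions on `f` and `g`
    (hf_mono : ∀ (x₁ x₂ u₁ u₂ : X), IsSubgradAt f u₁ x₁ → IsSubgradAt f u₂ x₂ →
      ⟪x₁ - x₂, Sf (x₁ - x₂)⟫ ≤ ⟪u₁ - u₂, x₁ - x₂⟫)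
    (hg_mono : ∀ (y₁ y₂ v₁ v₂ : Y), IsSubgradAt g v₁ y₁ → IsSubgradAt g v₂ y₂ →
      ⟪y₁ - y₂, Sg (y₁ - y₂)⟫ ≤ ⟪v₁ - v₂, y₁ - y₂⟫)
    (β γ : ℝ) (hβ : 0 < β) (hγ : 0 < γ)
    (x : ℕ → X) (y : ℕ → Y) (z : ℕ → Z)
    -- the proximal AMA iterations
    (hx : ∀ (t : ℕ) (x' : X),
      f (x (t+1)) + ((-⟪z t, A (x (t+1))⟫ : ℝ) : EReal)
        ≤ f x' + ((-⟪z t, A x'⟫ : ℝ) : EReal))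
    (hy : ∀ (t : ℕ) (y' : Y),
      g (y (t+1)) + ((-⟪z t, B (y (t+1))⟫ + β / 2 * ‖A (x (t+1)) + B (y (t+1)) - c‖ ^ 2
          + 1 / 2 * ⟪y (t+1) - y t, T (y (t+1) - y t)⟫ : ℝ) : EReal)
        ≤ g y' + ((-⟪z t, B y'⟫ + β / 2 * ‖A (x (t+1)) + B y' - c‖ ^ 2
          + 1 / 2 * ⟪y' - y t, T (y' - y t)⟫ : ℝ) : EReal))
    (hz : ∀ t : ℕ, z (t+1) = z t - (γ * β) • (A (x (t+1)) + B (y (t+1)) - c))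
    -- assumption A1
    (hA1 : ∃ (x1 : X) (y1 : Y) (z1 : Z),
      IsSubgradAt f (ContinuousLinearMap.adjoint A z1) x1 ∧
      IsSubgradAt g (ContinuousLinearMap.adjoint B z1) y1 ∧
      A x1 + B y1 - c = 0)
    -- condition (i): `Σg + T + βB*B ≻ 0`
    (hcond1 : ∀ w : Y, w ≠ 0 → 0 < ⟪w, Sg w⟫ + ⟪w, T w⟫ + β * ‖B w‖ ^ 2)
    (μ δ σ : ℝ) (hμ : 0 < μ) (hδ : 0 < δ) (hσ : 0 < σ)
    -- condition (ii): `2Σf − (β+μ)A*A ⪰ δI` and `γ + σ ≤ 1 + min{β,μ}/(2β)`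
    (hcond2 : ∀ w : X, δ * ‖w‖ ^ 2 ≤ 2 * ⟪w, Sf w⟫ - (β + μ) * ‖A w‖ ^ 2)
    (hcond3 : γ + σ ≤ 1 + min β μ / (2 * β))
    -- `(x̄, ȳ, z̄)` is the limit of the iterates guaranteed by the convergence theorem
    (xb : X) (yb : Y) (zb : Z)
    (hlimx : Tendsto x atTop (𝓝 xb)) (hlimy : Tendsto y atTop (𝓝 yb))
    (hlimz : Tendsto z atTop (𝓝 zb))
    (hA1f : IsSubgradAt f (ContinuousLinearMap.adjoint A zb) xb)
    (hA1g : IsSubgradAt g (ContinuousLinearMap.adjoint B zb) yb)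
    (hA1c : A xb + B yb - c = 0) :
    ∀ N : ℕ, 1 ≤ N →
      f xb + g yb
        ≤ f ((N : ℝ)⁻¹ • ∑ t ∈ Finset.Icc 1 N, x t)
            + g ((N : ℝ)⁻¹ • ∑ t ∈ Finset.Icc 1 N, y t)
          + ((‖zb‖ / Real.sqrt (N * σ * β) *
              Real.sqrt (1 / (γ * β) * ‖z 0 - zb‖ ^ 2
                + ⟪y 0 - yb, T (y 0 - yb)⟫) : ℝ) : EReal) := by
  intro N hN
  have hγβ : (0:ℝ) < γ * β := mul_pos hγ hβ
  -- subgradient of f at the iterates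
  have hfsub : ∀ t : ℕ, IsSubgradAt f (ContinuousLinearMap.adjoint A (z t)) (x (t+1)) := by
    intro t u
    have h2 := ereal_shift (hf_ne_bot u) _ _ (hx t u)
    have e : (-⟪z t, A (x (t+1))⟫ - -⟪z t, A u⟫ : ℝ)
        = ⟪ContinuousLinearMap.adjoint A (z t), u - x (t+1)⟫ := by
      rw [ContinuousLinearMap.adjoint_inner_left, map_sub, inner_sub_right]; ring
    rwa [e] at h2
  -- finiteness facts
  have hfxb : f xb ≠ ⊤ := by
    obtain ⟨u, hu⟩ := hf_proper
    intro htop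
    have h := hA1f u
    rw [htop, EReal.top_add_coe] at h
    exact hu (top_le_iff.mp h)
  have hgyb : g yb ≠ ⊤ := by
    obtain ⟨u, hu⟩ := hg_proper
    intro htop
    have h := hA1g u
    rw [htop, EReal.top_add_coe] at h
    exact hu (top_le_iff.mp h)
  have hfx : ∀ t : ℕ, f (x (t+1)) ≠ ⊤ :=
    fun t => ereal_ne_top_of_le _ _ hfxb (hf_ne_bot xb) (hx t xb)
  have hgy : ∀ t : ℕ, g (y (t+1)) ≠ ⊤ :=
    fun t => ereal_ne_top_of_le _ _ hgyb (hg_ne_bot yb) (hy t yb)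
  -- subgradient of g at the iterates
  have hgsub : ∀ t : ℕ, IsSubgradAt g
      (ContinuousLinearMap.adjoint B (z t)
        - β • ContinuousLinearMap.adjoint B (A (x (t+1)) + B (y (t+1)) - c)
        - T (y (t+1) - y t)) (y (t+1)) := by
    intro t
    have e : ∀ y' : Y, B y' + (A (x (t+1)) - c) = A (x (t+1)) + B y' - c := fun y' => by abel
    have h := gsub_aux g hg_ne_bot hg_cvx B T hT_sa hT_psd β hβ (z t)
      (A (x (t+1)) - c) (y t) (y (t+1))
      (fun y' => by rw [e, e]; exact hy t y') (hgy t)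
    rwa [e] at h
  -- per-step decrease of the Lyapunov function
  have hstep : ∀ t : ℕ, σ * β * ‖A (x (t+1)) + B (y (t+1)) - c‖ ^ 2
      ≤ (1 / (γ * β) * ‖z t - zb‖ ^ 2 + ⟪y t - yb, T (y t - yb)⟫)
        - (1 / (γ * β) * ‖z (t+1) - zb‖ ^ 2 + ⟪y (t+1) - yb, T (y (t+1) - yb)⟫) := by
    intro t
    have hr : A (x (t+1)) + B (y (t+1)) - c = A (x (t+1) - xb) + B (y (t+1) - yb) := by
      have h0 : A (x (t+1) - xb) + B (y (t+1) - yb)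
          = (A (x (t+1)) + B (y (t+1)) - c) - (A xb + B yb - c) := by
        simp only [map_sub]; abel
      rw [hA1c, sub_zero] at h0
      exact h0.symm
    have h1 : ⟪x (t+1) - xb, Sf (x (t+1) - xb)⟫ ≤ ⟪z t - zb, A (x (t+1) - xb)⟫ := by
      have h := hf_mono (x (t+1)) xb _ _ (hfsub t) hA1f
      rwa [← map_sub, ContinuousLinearMap.adjoint_inner_left] at h
    have hBdy : B (y (t+1) - yb)
        = (A (x (t+1)) + B (y (t+1)) - c) - A (x (t+1) - xb) := by rw [hr]; abel
    have hp : y (t+1) - y t = (y (t+1) - yb) - (y t - yb) := by abel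
    have h2 : 0 ≤ ⟪z t - zb, (A (x (t+1)) + B (y (t+1)) - c) - A (x (t+1) - xb)⟫
        - β * ⟪A (x (t+1)) + B (y (t+1)) - c,
            (A (x (t+1)) + B (y (t+1)) - c) - A (x (t+1) - xb)⟫
        - ⟪T ((y (t+1) - yb) - (y t - yb)), y (t+1) - yb⟫ := by
      have h := (hSg_psd _).trans (hg_mono (y (t+1)) yb _ _ (hgsub t) hA1g)
      have e : ⟪(ContinuousLinearMap.adjoint B (z t)
            - β • ContinuousLinearMap.adjoint B (A (x (t+1)) + B (y (t+1)) - c)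
            - T (y (t+1) - y t)) - ContinuousLinearMap.adjoint B zb, y (t+1) - yb⟫
          = ⟪z t - zb, B (y (t+1) - yb)⟫
            - β * ⟪A (x (t+1)) + B (y (t+1)) - c, B (y (t+1) - yb)⟫
            - ⟪T (y (t+1) - y t), y (t+1) - yb⟫ := by
        simp only [inner_sub_left, real_inner_smul_left,
          ContinuousLinearMap.adjoint_inner_left, map_sub, inner_sub_right]
        ring
      rw [e] at h
      rwa [hBdy, hp] at h
    have hS2 : (β + μ) * ‖A (x (t+1) - xb)‖ ^ 2
        ≤ 2 * ⟪x (t+1) - xb, Sf (x (t+1) - xb)⟫ := by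
      have h := hcond2 (x (t+1) - xb)
      nlinarith [mul_nonneg hδ.le (sq_nonneg ‖x (t+1) - xb‖)]
    have hkey := step_ineq T hT_sa hT_psd β γ σ μ hβ hγ hσ hμ hcond3
      (z t - zb) (A (x (t+1)) + B (y (t+1)) - c) (A (x (t+1) - xb))
      (y t - yb) (y (t+1) - yb) _ h1 h2 hS2
    have hzz : z (t+1) - zb = (z t - zb) - (γ * β) • (A (x (t+1)) + B (y (t+1)) - c) := by
      rw [hz t]; abel
    rw [hzz]
    linarith [hkey]
  -- telescoping
  have htel : ∑ t ∈ Finset.range N, σ * β * ‖A (x (t+1)) + B (y (t+1)) - c‖ ^ 2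
      ≤ 1 / (γ * β) * ‖z 0 - zb‖ ^ 2 + ⟪y 0 - yb, T (y 0 - yb)⟫ := by
    have h := Finset.sum_le_sum (fun i (_ : i ∈ Finset.range N) => hstep i)
    rw [Finset.sum_range_sub'
      (fun t => 1 / (γ * β) * ‖z t - zb‖ ^ 2 + ⟪y t - yb, T (y t - yb)⟫) N] at h
    have hFN : 0 ≤ 1 / (γ * β) * ‖z N - zb‖ ^ 2 + ⟪y N - yb, T (y N - yb)⟫ :=
      add_nonneg (by positivity) (hT_psd _)
    linarith [h, hFN]
  set F0 : ℝ := 1 / (γ * β) * ‖z 0 - zb‖ ^ 2 + ⟪y 0 - yb, T (y 0 - yb)⟫ with hF0def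
  have hF0 : 0 ≤ F0 := add_nonneg (by positivity) (hT_psd _)
  set xN : X := (N : ℝ)⁻¹ • ∑ t ∈ Finset.Icc 1 N, x t with hxNdef
  set yN : Y := (N : ℝ)⁻¹ • ∑ t ∈ Finset.Icc 1 N, y t with hyNdef
  have hNpos : (0:ℝ) < (N : ℝ) := by exact_mod_cast Nat.lt_of_lt_of_le Nat.zero_lt_one hN
  have hRsum : A xN + B yN - c
      = (N : ℝ)⁻¹ • ∑ t ∈ Finset.range N, (A (x (t+1)) + B (y (t+1)) - c) := by
    have hc : (N : ℝ)⁻¹ • ((N : ℕ) • c) = c := by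
      rw [← Nat.cast_smul_eq_nsmul ℝ, smul_smul, inv_mul_cancel₀ (ne_of_gt hNpos), one_smul]
    rw [hxNdef, hyNdef, map_smul, map_smul, map_sum, map_sum,
      sum_Icc_one, sum_Icc_one, Finset.sum_sub_distrib, Finset.sum_add_distrib,
      Finset.sum_const, Finset.card_range, smul_sub, smul_add, hc]
  set R : Z := A xN + B yN - c with hRdef
  have hnR : ‖R‖ ^ 2 ≤ F0 / ((N : ℝ) * σ * β) := by
    set S1 : ℝ := ∑ t ∈ Finset.range N, ‖A (x (t+1)) + B (y (t+1)) - c‖ with hS1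
    set S2 : ℝ := ∑ t ∈ Finset.range N, ‖A (x (t+1)) + B (y (t+1)) - c‖ ^ 2 with hS2
    have h1 : ‖R‖ ≤ (N : ℝ)⁻¹ * S1 := by
      rw [hRsum, norm_smul, Real.norm_eq_abs, abs_of_pos (inv_pos.mpr hNpos)]
      exact mul_le_mul_of_nonneg_left (norm_sum_le _ _) (inv_pos.mpr hNpos).le
    have h2 := Finset.sum_mul_sq_le_sq_mul_sq (Finset.range N) (fun _ => (1:ℝ))
      (fun t => ‖A (x (t+1)) + B (y (t+1)) - c‖)
    simp only [one_pow, one_mul, mul_one, Finset.sum_const, Finset.card_range, nsmul_eq_mul] at h2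
    rw [← hS1, ← hS2] at h2
    have h3 : σ * β * S2 ≤ F0 := by
      rw [hS2, Finset.mul_sum]
      exact htel
    have hS1n : 0 ≤ S1 := Finset.sum_nonneg fun i _ => norm_nonneg _
    have hS2n : 0 ≤ S2 := Finset.sum_nonneg fun i _ => sq_nonneg _
    have h4 : ‖R‖ ^ 2 ≤ ((N : ℝ)⁻¹) ^ 2 * S1 ^ 2 := by
      rw [← mul_pow]
      exact pow_le_pow_left₀ (norm_nonneg _) h1 2
    have h5 : ‖R‖ ^ 2 ≤ (N : ℝ)⁻¹ * S2 := by
      have e : ((N : ℝ)⁻¹) ^ 2 * ((N : ℝ) * S2) = (N : ℝ)⁻¹ * S2 := by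
        field_simp
      calc ‖R‖ ^ 2 ≤ ((N : ℝ)⁻¹) ^ 2 * S1 ^ 2 := h4
        _ ≤ ((N : ℝ)⁻¹) ^ 2 * ((N : ℝ) * S2) :=
          mul_le_mul_of_nonneg_left h2 (sq_nonneg _)
        _ = (N : ℝ)⁻¹ * S2 := e
    have h6 : S2 ≤ F0 / (σ * β) := by
      rw [le_div_iff₀ (by positivity)]
      have e2 : S2 * (σ * β) = σ * β * S2 := by ring
      linarith [h3]
    calc ‖R‖ ^ 2 ≤ (N : ℝ)⁻¹ * S2 := h5
      _ ≤ (N : ℝ)⁻¹ * (F0 / (σ * β)) :=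
        mul_le_mul_of_nonneg_left h6 (inv_pos.mpr hNpos).le
      _ = F0 / ((N : ℝ) * σ * β) := by
        rw [inv_mul_eq_div, div_div]
        ring_nf
  have hRnorm : ‖R‖ ≤ Real.sqrt F0 / Real.sqrt ((N : ℝ) * σ * β) := by
    rw [← Real.sqrt_div hF0, ← Real.sqrt_sq (norm_nonneg R)]
    exact Real.sqrt_le_sqrt hnR
  have hinner : -(‖zb‖ / Real.sqrt ((N : ℝ) * σ * β) * Real.sqrt F0) ≤ ⟪zb, R⟫ := by
    have h1 : -(‖zb‖ * ‖R‖) ≤ ⟪zb, R⟫ := by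
      have := abs_real_inner_le_norm zb R
      have := neg_abs_le (⟪zb, R⟫ : ℝ)
      linarith
    have h2 : ‖zb‖ * ‖R‖ ≤ ‖zb‖ / Real.sqrt ((N : ℝ) * σ * β) * Real.sqrt F0 := by
      have h3 := mul_le_mul_of_nonneg_left hRnorm (norm_nonneg zb)
      calc ‖zb‖ * ‖R‖ ≤ ‖zb‖ * (Real.sqrt F0 / Real.sqrt ((N : ℝ) * σ * β)) := h3
        _ = ‖zb‖ / Real.sqrt ((N : ℝ) * σ * β) * Real.sqrt F0 := by ring
    linarith
  -- final assembly
  rcases eq_or_ne (f xN) ⊤ with hfN | hfN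
  · rw [hfN, EReal.top_add_of_ne_bot (hg_ne_bot yN), EReal.top_add_of_ne_bot (EReal.coe_ne_bot _)]
    exact le_top
  rcases eq_or_ne (g yN) ⊤ with hgN | hgN
  · rw [hgN, EReal.add_top_of_ne_bot (hf_ne_bot xN), EReal.top_add_of_ne_bot (EReal.coe_ne_bot _)]
    exact le_top
  have h1 := hA1f xN
  have h2 := hA1g yN
  obtain ⟨Fb, hFb⟩ : ∃ r : ℝ, f xb = (r : EReal) :=
    ⟨_, (EReal.coe_toReal hfxb (hf_ne_bot xb)).symm⟩
  obtain ⟨Gb, hGb⟩ : ∃ r : ℝ, g yb = (r : EReal) :=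
    ⟨_, (EReal.coe_toReal hgyb (hg_ne_bot yb)).symm⟩
  obtain ⟨FN, hFN2⟩ : ∃ r : ℝ, f xN = (r : EReal) :=
    ⟨_, (EReal.coe_toReal hfN (hf_ne_bot xN)).symm⟩
  obtain ⟨GN, hGN2⟩ : ∃ r : ℝ, g yN = (r : EReal) :=
    ⟨_, (EReal.coe_toReal hgN (hg_ne_bot yN)).symm⟩
  rw [hFb, hFN2, ← EReal.coe_add, EReal.coe_le_coe_iff] at h1
  rw [hGb, hGN2, ← EReal.coe_add, EReal.coe_le_coe_iff] at h2
  have hsum : ⟪ContinuousLinearMap.adjoint A zb, xN - xb⟫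
      + ⟪ContinuousLinearMap.adjoint B zb, yN - yb⟫ = ⟪zb, R⟫ := by
    rw [ContinuousLinearMap.adjoint_inner_left, ContinuousLinearMap.adjoint_inner_left,
      ← inner_add_right]
    congr 1
    have h0 : A (xN - xb) + B (yN - yb) = (A xN + B yN - c) - (A xb + B yb - c) := by
      simp only [map_sub]; abel
    rw [hA1c, sub_zero] at h0
    exact h0.trans hRdef.symm
  rw [hFb, hGb, hFN2, hGN2, ← EReal.coe_add, ← EReal.coe_add, ← EReal.coe_add,
    EReal.coe_le_coe_iff]
  linarith [h1, h2, hinner, hsum]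
end

section
/- Let {(x^t, y^t, z^t)} be generated by the proximal AMA, suppose assumption A1 holds with triple (x̄, ȳ, z̄), and suppose β>0, T ⪰ 0 and γ>0 satisfy, for some positive μ and σ, 2Σ_f − (β+μ)A*A ⪰ 0 and γ + σ ≤ 1 + min{β,μ}/(2β). Then for every N ≥ 1, Σ_{t=0}^{N−1} ‖z^{t+1} − z^t‖² ≤ (γ²β/σ)·((1/(γβ))‖z⁰ − z̄‖² + ‖y⁰ − ȳ‖²_T) − (γ²β/σ)·((1/(γβ))‖z^N − z̄‖² + ‖y^N − ȳ‖²_T). -/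
open RealInnerProductSpace Filter Topology

lemma subgrad_ne_top {E : Type*} [NormedAddCommGroup E] [InnerProductSpace ℝ E]
    (f : E → EReal) (v w : E) (h : IsSubgradAt f v w) (hp : ∃ u, f u ≠ ⊤) : f w ≠ ⊤ := by
  obtain ⟨u, hu⟩ := hp
  intro htop
  have := h u
  rw [htop, EReal.top_add_coe, top_le_iff] at this
  exact hu this

lemma isSubgradAt_of_real {E : Type*} [NormedAddCommGroup E] [InnerProductSpace ℝ E]
    (f : E → EReal) (hbot : ∀ x, f x ≠ ⊥) (v w : E) (hw : f w ≠ ⊤)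
    (h : ∀ u, f u ≠ ⊤ → (f w).toReal + ⟪v, u - w⟫ ≤ (f u).toReal) : IsSubgradAt f v w := by
  intro u
  by_cases hu : f u = ⊤
  · rw [hu]; exact le_top
  · have h1 : f w = ((f w).toReal : EReal) := (EReal.coe_toReal hw (hbot w)).symm
    have h2 : f u = ((f u).toReal : EReal) := (EReal.coe_toReal hu (hbot u)).symm
    rw [h1, h2, ← EReal.coe_add, EReal.coe_le_coe_iff]
    exact h u hu

set_option maxHeartbeats 2000000 in
/-- **Summed dual-step bound for the proximal AMA (inequality (bdz) in the proof of
Theorem 3.2).** For every `N ≥ 1`,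
`Σ_{t=0}^{N−1} ‖z^{t+1} − z^t‖²
  ≤ (γ²β/σ)((1/(γβ))‖z⁰ − z̄‖² + ‖y⁰ − ȳ‖²_T)
    − (γ²β/σ)((1/(γβ))‖z^N − z̄‖² + ‖y^N − ȳ‖²_T)`. -/
theorem stmt_6
    {X Y Z : Type*}
    [NormedAddCommGroup X] [InnerProductSpace ℝ X] [FiniteDimensional ℝ X]
    [NormedAddCommGroup Y] [InnerProductSpace ℝ Y] [FiniteDimensional ℝ Y]
    [NormedAddCommGroup Z] [InnerProductSpace ℝ Z] [FiniteDimensional ℝ Z]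
    (f : X → EReal) (g : Y → EReal)
    -- `f` and `g` are proper
    (hf_ne_bot : ∀ x, f x ≠ ⊥) (hf_proper : ∃ x, f x ≠ ⊤)
    (hg_ne_bot : ∀ y, g y ≠ ⊥) (hg_proper : ∃ y, g y ≠ ⊤)
    -- `f` and `g` are closed
    (hf_lsc : LowerSemicontinuous f) (hg_lsc : LowerSemicontinuous g)
    -- `f` and `g` are convex
    (hf_cvx : ∀ (x₁ x₂ : X) (a b : ℝ), 0 ≤ a → 0 ≤ b → a + b = 1 →
      f (a • x₁ + b • x₂) ≤ (a : EReal) * f x₁ + (b : EReal) * f x₂)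
    (hg_cvx : ∀ (y₁ y₂ : Y) (a b : ℝ), 0 ≤ a → 0 ≤ b → a + b = 1 →
      g (a • y₁ + b • y₂) ≤ (a : EReal) * g y₁ + (b : EReal) * g y₂)
    (A : X →L[ℝ] Z) (B : Y →L[ℝ] Z) (c : Z)
    (Sf : X →L[ℝ] X) (Sg : Y →L[ℝ] Y) (T : Y →L[ℝ] Y)
    -- `Sf ≻ 0`, `Sg ⪰ 0`, `T ⪰ 0` are self-adjoint
    (hSf_sa : ∀ u v : X, ⟪Sf u, v⟫ = ⟪u, Sf v⟫)
    (hSg_sa : ∀ u v : Y, ⟪Sg u, v⟫ = ⟪u, Sg v⟫)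
    (hT_sa : ∀ u v : Y, ⟪T u, v⟫ = ⟪u, T v⟫)
    (hSf_pd : ∀ x : X, x ≠ 0 → 0 < ⟪x, Sf x⟫)
    (hSg_psd : ∀ y : Y, 0 ≤ ⟪y, Sg y⟫)
    (hT_psd : ∀ y : Y, 0 ≤ ⟪y, T y⟫)
    -- the subdifferential monotonicity conditions on `f` and `g`
    (hf_mono : ∀ (x₁ x₂ u₁ u₂ : X), IsSubgradAt f u₁ x₁ → IsSubgradAt f u₂ x₂ →
      ⟪x₁ - x₂, Sf (x₁ - x₂)⟫ ≤ ⟪u₁ - u₂, x₁ - x₂⟫)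
    (hg_mono : ∀ (y₁ y₂ v₁ v₂ : Y), IsSubgradAt g v₁ y₁ → IsSubgradAt g v₂ y₂ →
      ⟪y₁ - y₂, Sg (y₁ - y₂)⟫ ≤ ⟪v₁ - v₂, y₁ - y₂⟫)
    (β γ : ℝ) (hβ : 0 < β) (hγ : 0 < γ)
    (x : ℕ → X) (y : ℕ → Y) (z : ℕ → Z)
    -- the proximal AMA iterations
    (hx : ∀ (t : ℕ) (x' : X),
      f (x (t+1)) + ((-⟪z t, A (x (t+1))⟫ : ℝ) : EReal)
        ≤ f x' + ((-⟪z t, A x'⟫ : ℝ) : EReal))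
    (hy : ∀ (t : ℕ) (y' : Y),
      g (y (t+1)) + ((-⟪z t, B (y (t+1))⟫ + β / 2 * ‖A (x (t+1)) + B (y (t+1)) - c‖ ^ 2
          + 1 / 2 * ⟪y (t+1) - y t, T (y (t+1) - y t)⟫ : ℝ) : EReal)
        ≤ g y' + ((-⟪z t, B y'⟫ + β / 2 * ‖A (x (t+1)) + B y' - c‖ ^ 2
          + 1 / 2 * ⟪y' - y t, T (y' - y t)⟫ : ℝ) : EReal))
    (hz : ∀ t : ℕ, z (t+1) = z t - (γ * β) • (A (x (t+1)) + B (y (t+1)) - c))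
    -- assumption A1 with an explicit triple `(x̄, ȳ, z̄)`
    (xb : X) (yb : Y) (zb : Z)
    (hA1f : IsSubgradAt f (ContinuousLinearMap.adjoint A zb) xb)
    (hA1g : IsSubgradAt g (ContinuousLinearMap.adjoint B zb) yb)
    (hA1c : A xb + B yb - c = 0)
    (μ σ : ℝ) (hμ : 0 < μ) (hσ : 0 < σ)
    -- `2Σf − (β+μ)A*A ⪰ 0` and `γ + σ ≤ 1 + min{β,μ}/(2β)`
    (hcond2 : ∀ w : X, 0 ≤ 2 * ⟪w, Sf w⟫ - (β + μ) * ‖A w‖ ^ 2)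
    (hcond3 : γ + σ ≤ 1 + min β μ / (2 * β)) :
    ∀ N : ℕ, 1 ≤ N →
      ∑ t ∈ Finset.range N, ‖z (t+1) - z t‖ ^ 2
        ≤ γ ^ 2 * β / σ * (1 / (γ * β) * ‖z 0 - zb‖ ^ 2 + ⟪y 0 - yb, T (y 0 - yb)⟫)
          - γ ^ 2 * β / σ * (1 / (γ * β) * ‖z N - zb‖ ^ 2 + ⟪y N - yb, T (y N - yb)⟫) := by
  -- finiteness facts
  have hfxb : f xb ≠ ⊤ := subgrad_ne_top f _ _ hA1f hf_proper
  have hgyb : g yb ≠ ⊤ := subgrad_ne_top g _ _ hA1g hg_proper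
  have hfx : ∀ t : ℕ, f (x (t+1)) ≠ ⊤ := by
    intro t htop
    have h := hx t xb
    rw [htop, EReal.top_add_coe, top_le_iff,
      (EReal.coe_toReal hfxb (hf_ne_bot xb)).symm, ← EReal.coe_add] at h
    exact EReal.coe_ne_top _ h
  have hgy : ∀ t : ℕ, g (y (t+1)) ≠ ⊤ := by
    intro t htop
    have h := hy t yb
    rw [htop, EReal.top_add_coe, top_le_iff,
      (EReal.coe_toReal hgyb (hg_ne_bot yb)).symm, ← EReal.coe_add] at h
    exact EReal.coe_ne_top _ h
  -- subgradient from the x-update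
  have hsubf : ∀ t : ℕ, IsSubgradAt f (ContinuousLinearMap.adjoint A (z t)) (x (t+1)) := by
    intro t
    apply isSubgradAt_of_real f hf_ne_bot _ _ (hfx t)
    intro u hu
    have h := hx t u
    rw [(EReal.coe_toReal (hfx t) (hf_ne_bot _)).symm,
      (EReal.coe_toReal hu (hf_ne_bot u)).symm, ← EReal.coe_add, ← EReal.coe_add,
      EReal.coe_le_coe_iff] at h
    have hadj : ⟪ContinuousLinearMap.adjoint A (z t), u - x (t+1)⟫
        = ⟪z t, A u⟫ - ⟪z t, A (x (t+1))⟫ := by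
      rw [ContinuousLinearMap.adjoint_inner_left, map_sub, inner_sub_right]
    linarith [h, hadj]
  -- subgradient from the y-update
  have hsubg : ∀ t : ℕ, IsSubgradAt g
      (ContinuousLinearMap.adjoint B (z t - β • (A (x (t+1)) + B (y (t+1)) - c))
        - T (y (t+1) - y t)) (y (t+1)) := by
    intro t
    set w := y (t+1) with hw
    set r := A (x (t+1)) + B w - c with hr
    have hgwtop : g w ≠ ⊤ := hgy t
    apply isSubgradAt_of_real g hg_ne_bot _ _ hgwtop
    intro u hu
    set d := u - w with hd
    set v := ContinuousLinearMap.adjoint B (z t - β • r) - T (w - y t) with hv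
    clear_value w r d v
    obtain ⟨C, hC⟩ : ∃ C : ℝ, C = β / 2 * ‖B d‖^2 + 1/2 * ⟪d, T d⟫ := ⟨_, rfl⟩
    have hC0 : 0 ≤ C := by
      rw [hC]
      have h1 : (0:ℝ) ≤ β / 2 * ‖B d‖^2 := by positivity
      linarith [hT_psd d]
    apply le_of_forall_pos_le_add
    intro ε hε
    obtain ⟨lam, hlam0, hlam1, hlamC⟩ : ∃ lam : ℝ, 0 < lam ∧ lam ≤ 1 ∧ lam * C ≤ ε := by
      refine ⟨min 1 (ε / (C + 1)), lt_min one_pos (by positivity), min_le_left _ _, ?_⟩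
      have h1 : min 1 (ε / (C + 1)) ≤ ε / (C + 1) := min_le_right _ _
      have h2 : min 1 (ε / (C + 1)) * C ≤ (ε / (C + 1)) * C := mul_le_mul_of_nonneg_right h1 hC0
      have h3 : (ε / (C + 1)) * C ≤ ε := by
        rw [div_mul_eq_mul_div, div_le_iff₀ (by linarith)]
        nlinarith
      linarith
    -- the perturbed point
    have hcomb : (1 - lam) • w + lam • u = w + lam • d := by
      rw [hd, sub_smul, one_smul, smul_sub]; abel
    have hcvx := hg_cvx w u (1 - lam) lam (by linarith) hlam0.le (by ring)
    rw [hcomb] at hcvx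
    have hmin := hy t (w + lam • d)
    rw [← hw, ← hr] at hmin
    -- the quadratic expansion
    have hexp : (-⟪z t, B (w + lam • d)⟫ + β / 2 * ‖A (x (t+1)) + B (w + lam • d) - c‖ ^ 2
          + 1 / 2 * ⟪w + lam • d - y t, T (w + lam • d - y t)⟫)
        = (-⟪z t, B w⟫ + β / 2 * ‖r‖ ^ 2
          + 1 / 2 * ⟪w - y t, T (w - y t)⟫) + lam * (-⟪v, d⟫) + lam^2 * C := by
      have e1 : A (x (t+1)) + B (w + lam • d) - c = r + lam • B d := by
        rw [map_add, map_smul, hr]; abel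
      have e2 : w + lam • d - y t = (w - y t) + lam • d := by abel
      have e3 : ‖r + lam • B d‖^2 = ‖r‖^2 + 2 * (lam * ⟪r, B d⟫) + lam^2 * ‖B d‖^2 := by
        rw [norm_add_sq_real, real_inner_smul_right, norm_smul, mul_pow, Real.norm_eq_abs,
          sq_abs]
      have e4 : ⟪(w - y t) + lam • d, T ((w - y t) + lam • d)⟫
          = ⟪w - y t, T (w - y t)⟫ + 2 * (lam * ⟪w - y t, T d⟫) + lam^2 * ⟪d, T d⟫ := by
        rw [map_add, map_smul, inner_add_left, inner_add_right, inner_add_right,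
          real_inner_smul_left, real_inner_smul_right, real_inner_smul_left,
          real_inner_smul_right]
        have h2 : ⟪d, T (w - y t)⟫ = ⟪w - y t, T d⟫ := by
          rw [← hT_sa d (w - y t), real_inner_comm]
        rw [h2]; ring
      have e5 : ⟪v, d⟫ = ⟪z t, B d⟫ - β * ⟪r, B d⟫ - ⟪w - y t, T d⟫ := by
        rw [hv, inner_sub_left, ContinuousLinearMap.adjoint_inner_left, inner_sub_left,
          real_inner_smul_left, hT_sa (w - y t) d]
      have e6 : ⟪z t, B (w + lam • d)⟫ = ⟪z t, B w⟫ + lam * ⟪z t, B d⟫ := by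
        rw [map_add, map_smul, inner_add_right, real_inner_smul_right]
      rw [e1, e2, e3, e4, e5, e6, hC]
      ring
    -- convert everything to reals
    have hglam_ne_top : g (w + lam • d) ≠ ⊤ := by
      intro htop
      rw [htop] at hcvx
      have h1 : ((1 - lam : ℝ) : EReal) * g w + (lam : ℝ) * g u ≠ ⊤ := by
        rw [(EReal.coe_toReal hgwtop (hg_ne_bot _)).symm,
          (EReal.coe_toReal hu (hg_ne_bot u)).symm, ← EReal.coe_mul, ← EReal.coe_mul,
          ← EReal.coe_add]
        exact EReal.coe_ne_top _
      exact h1 (top_le_iff.mp hcvx)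
    have hgw : g w = (((g w).toReal : ℝ) : EReal) := (EReal.coe_toReal hgwtop (hg_ne_bot _)).symm
    have hgu : g u = (((g u).toReal : ℝ) : EReal) := (EReal.coe_toReal hu (hg_ne_bot u)).symm
    have hgl : g (w + lam • d) = (((g (w + lam • d)).toReal : ℝ) : EReal) :=
      (EReal.coe_toReal hglam_ne_top (hg_ne_bot _)).symm
    rw [hgw, hgu, hgl, ← EReal.coe_mul, ← EReal.coe_mul, ← EReal.coe_add,
      EReal.coe_le_coe_iff] at hcvx
    rw [hgw, hgl, ← EReal.coe_add, ← EReal.coe_add, EReal.coe_le_coe_iff] at hmin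
    rw [hexp] at hmin
    have key : lam * ((g w).toReal + ⟪v, d⟫) ≤ lam * ((g u).toReal + lam * C) := by nlinarith
    have key2 := (mul_le_mul_iff_right₀ hlam0).mp key
    linarith
  -- the per-step estimate
  have step : ∀ t : ℕ, ‖z (t+1) - z t‖ ^ 2
      ≤ γ ^ 2 * β / σ *
        ((1 / (γ * β) * ‖z t - zb‖ ^ 2 + ⟪y t - yb, T (y t - yb)⟫)
          - (1 / (γ * β) * ‖z (t+1) - zb‖ ^ 2 + ⟪y (t+1) - yb, T (y (t+1) - yb)⟫)) := by
    intro t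
    have hsg := hsubg t
    have hzt := hz t
    set r := A (x (t+1)) + B (y (t+1)) - c with hrdef
    set Δx := x (t+1) - xb with hΔx
    set Δy := y (t+1) - yb with hΔy
    clear_value r Δx Δy
    have hc : A xb + B yb = c := by
      have h := hA1c; rwa [sub_eq_zero] at h
    have hrsplit : r = A Δx + B Δy := by
      rw [hrdef, hΔx, hΔy, map_sub, map_sub, ← hc]; abel
    -- f monotonicity
    have hmf : ⟪Δx, Sf Δx⟫ ≤ ⟪z t - zb, A Δx⟫ := by
      have h := hf_mono (x (t+1)) xb (ContinuousLinearMap.adjoint A (z t))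
        (ContinuousLinearMap.adjoint A zb) (hsubf t) hA1f
      rwa [← map_sub, ContinuousLinearMap.adjoint_inner_left, ← hΔx] at h
    -- g monotonicity
    have hmg : β * ⟪r, B Δy⟫ + ⟪T (y (t+1) - y t), Δy⟫ ≤ ⟪z t - zb, B Δy⟫ := by
      have h := hg_mono (y (t+1)) yb
        (ContinuousLinearMap.adjoint B (z t - β • r) - T (y (t+1) - y t))
        (ContinuousLinearMap.adjoint B zb) hsg hA1g
      have h0 := hSg_psd Δy
      rw [← hΔy] at h
      have hexp : ⟪ContinuousLinearMap.adjoint B (z t - β • r) - T (y (t+1) - y t)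
            - ContinuousLinearMap.adjoint B zb, Δy⟫
          = ⟪z t - zb, B Δy⟫ - β * ⟪r, B Δy⟫ - ⟪T (y (t+1) - y t), Δy⟫ := by
        rw [inner_sub_left, inner_sub_left, ContinuousLinearMap.adjoint_inner_left,
          ContinuousLinearMap.adjoint_inner_left, inner_sub_left, real_inner_smul_left,
          inner_sub_left]
        ring
      rw [hexp] at h
      linarith
    -- T-identity
    have hTid : ⟪T (y (t+1) - y t), Δy⟫
        = 1/2 * (⟪Δy, T Δy⟫ + ⟪y (t+1) - y t, T (y (t+1) - y t)⟫
            - ⟪y t - yb, T (y t - yb)⟫) := by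
      obtain ⟨b, hb⟩ : ∃ b : Y, b = y t - yb := ⟨_, rfl⟩
      rw [← hb]
      have e : y (t+1) - y t = Δy - b := by rw [hΔy, hb]; abel
      rw [e, map_sub]
      simp only [inner_sub_left, inner_sub_right]
      have h1 : ⟪T Δy, Δy⟫ = ⟪Δy, T Δy⟫ := hT_sa _ _
      have h2 : ⟪T b, Δy⟫ = ⟪b, T Δy⟫ := hT_sa _ _
      have h3 : ⟪T Δy, b⟫ = ⟪Δy, T b⟫ := hT_sa _ _
      have h4 : ⟪T Δy, b⟫ = ⟪b, T Δy⟫ := real_inner_comm _ _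
      have h5 : ⟪T b, b⟫ = ⟪b, T b⟫ := hT_sa _ _
      linarith
    -- scalar bookkeeping
    have hβμ : (0:ℝ) < β + μ := by linarith
    have hR : (0:ℝ) ≤ ‖r‖^2 := sq_nonneg _
    have hQc := hT_psd (y (t+1) - y t)
    have hABsplit : ⟪z t - zb, r⟫ = ⟪z t - zb, A Δx⟫ + ⟪z t - zb, B Δy⟫ := by
      rw [hrsplit, inner_add_right]
    have hrBy : ⟪r, A Δx⟫ + ⟪r, B Δy⟫ = ‖r‖^2 := by
      rw [← inner_add_right, ← hrsplit, real_inner_self_eq_norm_sq]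
    have hcomm : ⟪A Δx, r⟫ = ⟪r, A Δx⟫ := real_inner_comm _ _
    have hYoung : 2*β*(β+μ)*⟪A Δx, r⟫ ≤ (β+μ)^2*‖A Δx‖^2 + β^2*‖r‖^2 := by
      have h0 : (0:ℝ) ≤ ‖(β+μ) • A Δx - β • r‖^2 := sq_nonneg _
      rw [norm_sub_sq_real, real_inner_smul_left, real_inner_smul_right, norm_smul,
        norm_smul, mul_pow, mul_pow, Real.norm_eq_abs, Real.norm_eq_abs, sq_abs, sq_abs] at h0
      nlinarith [h0]
    have hC2 := hcond2 Δx
    have hmin : min β μ * (β + μ) ≤ 2*(β*μ) := by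
      rcases le_total β μ with h | h
      · rw [min_eq_left h]; nlinarith
      · rw [min_eq_right h]; nlinarith
    have hγσβ : (γ+σ)*β ≤ β + min β μ / 2 := by
      have h1 : (1 + min β μ / (2*β))*β = β + min β μ/2 := by field_simp
      nlinarith [mul_le_mul_of_nonneg_right hcond3 hβ.le]
    -- the key inequality
    have key : (γ+σ)*β*‖r‖^2 + ⟪Δy, T Δy⟫ - ⟪y t - yb, T (y t - yb)⟫
        ≤ 2*⟪z t - zb, r⟫ := by
      have k1 : 2*⟪Δx, Sf Δx⟫ + 2*β*‖r‖^2 - 2*β*⟪A Δx, r⟫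
          + ⟪Δy, T Δy⟫ + ⟪y (t+1) - y t, T (y (t+1) - y t)⟫ - ⟪y t - yb, T (y t - yb)⟫
          ≤ 2*⟪z t - zb, r⟫ := by
        have hrBy2 : β * (⟪r, A Δx⟫ + ⟪r, B Δy⟫) = β * ‖r‖^2 := by rw [hrBy]
        have hcomm2 : β * ⟪A Δx, r⟫ = β * ⟪r, A Δx⟫ := by rw [hcomm]
        nlinarith [hmf, hmg, hABsplit, hTid, hrBy2, hcomm2]
      have k2 : 2*β*(β+μ)*⟪A Δx, r⟫ ≤ 2*(β+μ)*⟪Δx, Sf Δx⟫ + β^2*‖r‖^2 := by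
        nlinarith [hYoung, mul_nonneg hβμ.le hC2]
      have t3 : (β+μ)*(β+min β μ/2) ≤ β^2+2*(β*μ) := by nlinarith [hmin]
      have t2 : (β+μ)*((γ+σ)*β)*‖r‖^2 ≤ (β^2+2*(β*μ))*‖r‖^2 := by
        have := mul_le_mul_of_nonneg_left hγσβ hβμ.le
        nlinarith [mul_le_mul_of_nonneg_right (le_trans this t3) hR]
      have k4 : (γ+σ)*β*‖r‖^2 ≤ 2*⟪Δx, Sf Δx⟫ + 2*β*‖r‖^2 - 2*β*⟪A Δx, r⟫ := by
        have h6 : (β+μ)*((γ+σ)*β*‖r‖^2)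
            ≤ (β+μ)*(2*⟪Δx, Sf Δx⟫ + 2*β*‖r‖^2 - 2*β*⟪A Δx, r⟫) := by
          nlinarith [k2, t2]
        exact (mul_le_mul_iff_right₀ hβμ).mp h6
      linarith [k1, k4, hQc]
    -- assemble
    have hγβ : (0:ℝ) < γ * β := by positivity
    have hzz : z (t+1) - z t = -((γ*β) • r) := by rw [hzt]; abel
    have hzb1 : z (t+1) - zb = (z t - zb) - (γ*β) • r := by rw [hzt]; abel
    have hnorm1 : ‖z (t+1) - z t‖^2 = (γ*β)^2 * ‖r‖^2 := by
      rw [hzz, norm_neg, norm_smul, mul_pow, Real.norm_eq_abs, sq_abs]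
    have hnorm2 : ‖z (t+1) - zb‖^2
        = ‖z t - zb‖^2 - 2*((γ*β)*⟪z t - zb, r⟫) + (γ*β)^2*‖r‖^2 := by
      rw [hzb1, norm_sub_sq_real, real_inner_smul_right, norm_smul, mul_pow,
        Real.norm_eq_abs, sq_abs]
    have hD : (1/(γ*β)*‖z t - zb‖^2 + ⟪y t - yb, T (y t - yb)⟫)
          - (1/(γ*β)*‖z (t+1) - zb‖^2 + ⟪Δy, T Δy⟫)
        = 2*⟪z t - zb, r⟫ - γ*β*‖r‖^2 + ⟪y t - yb, T (y t - yb)⟫ - ⟪Δy, T Δy⟫ := by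
      rw [hnorm2]; field_simp; ring
    rw [hnorm1, hD]
    have h5 : σ*(β*‖r‖^2) ≤ 2*⟪z t - zb, r⟫ - γ*β*‖r‖^2
        + ⟪y t - yb, T (y t - yb)⟫ - ⟪Δy, T Δy⟫ := by linarith [key]
    calc (γ*β)^2*‖r‖^2 = γ^2*β/σ * (σ*(β*‖r‖^2)) := by field_simp
      _ ≤ _ := mul_le_mul_of_nonneg_left h5 (by positivity)
  -- summation
  intro N hN
  refine le_trans (Finset.sum_le_sum fun t _ => step t) ?_
  rw [← Finset.mul_sum,
    Finset.sum_range_sub' (fun t => 1 / (γ * β) * ‖z t - zb‖ ^ 2 + ⟪y t - yb, T (y t - yb)⟫) N]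
  exact le_of_eq (by ring)
end

section
/- Let h : Z → ℝ be convex and differentiable with ∇h Lipschitz continuous, P : Y → (−∞,∞] proper closed convex, M : Z → Y a nonzero linear map, and b ∈ Y, and assume (Range(M) − b) ∩ ri(dom P) ≠ ∅. If z̄ minimizes z ↦ h(z) + P(Mz − b), then there exists ȳ ∈ ∂P(Mz̄ − b) such that, setting x̄ = ∇h(z̄), one has x̄ + M*ȳ = 0, Mz̄ − b ∈ ∂P*(ȳ), and z̄ ∈ ∂h*(x̄). In particular, assumption A1 holds for the dual problem min_{x,y} h*(x) + P*(y) + ⟨b, y⟩ subject to x + M*y = 0 (with f = h*, g = P* + ⟨b, ·⟩, A = I, B = M*, c = 0). -/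
open RealInnerProductSpace Filter Topology

/-- The convex conjugate of an extended-real-valued function. -/
noncomputable def conj {E : Type*} [NormedAddCommGroup E] [InnerProductSpace ℝ E]
    (f : E → EReal) (w : E) : EReal :=
  ⨆ u, ((⟪w, u⟫ : ℝ) : EReal) - f u

/-- The convex conjugate of a real-valued function. -/
noncomputable def conjR {E : Type*} [NormedAddCommGroup E] [InnerProductSpace ℝ E]
    (f : E → ℝ) (w : E) : EReal :=
  ⨆ u, ((⟪w, u⟫ - f u : ℝ) : EReal)

open Set


/-- If `φ` has derivative `c` at `0` and `φ t - φ 0 ≤ t * A` for small positive `t`,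
then `c ≤ A`. -/
lemma slope_le_of_lin_bound (φ : ℝ → ℝ) (c A : ℝ) (hd : HasDerivAt φ c 0)
    (hb : ∀ t : ℝ, 0 < t → t < 1 → φ t - φ 0 ≤ t * A) : c ≤ A := by
  have h1 : Tendsto (slope φ 0) (𝓝[>] 0) (𝓝 c) :=
    (hasDerivAt_iff_tendsto_slope.1 hd).mono_left
      (nhdsWithin_mono _ (fun t ht => ne_of_gt ht))
  refine le_of_tendsto h1 ?_
  filter_upwards [Ioo_mem_nhdsGT (zero_lt_one)] with t ht
  rw [slope_def_field]
  rw [div_le_iff₀ (by linarith [ht.1] : (0:ℝ) < t - 0)]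
  have := hb t ht.1 ht.2
  nlinarith

/-- Directional derivative of a function with a gradient. -/
lemma dirDeriv {Z : Type*} [NormedAddCommGroup Z] [InnerProductSpace ℝ Z] [CompleteSpace Z]
    (h : Z → ℝ) (x' z d : Z) (hg : HasGradientAt h x' z) :
    HasDerivAt (fun t : ℝ => h (z + t • d)) ⟪x', d⟫ 0 := by
  have hl : HasDerivAt (fun t : ℝ => z + t • d) d 0 := by
    simpa using ((hasDerivAt_id (0 : ℝ)).smul_const d).const_add z
  have hf : HasFDerivAt h (InnerProductSpace.toDual ℝ Z x') (z + (0 : ℝ) • d) := by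
    simpa using hg.hasFDerivAt
  have := hf.comp_hasDerivAt 0 hl
  simp at this
  exact this

/-- Pushing past a point of the intrinsic interior. -/
lemma ri_push {Y : Type*} [NormedAddCommGroup Y] [NormedSpace ℝ Y] (S : Set Y) {x q : Y}
    (hx : x ∈ intrinsicInterior ℝ S) (hq : q ∈ S) :
    ∃ ε : ℝ, 0 < ε ∧ x + ε • (x - q) ∈ S := by
  obtain ⟨x', hx', hxx⟩ := hx
  subst hxx
  have hqs : q ∈ affineSpan ℝ S := subset_affineSpan ℝ S hq
  have hmem : ∀ t : ℝ, (x' : Y) + t • ((x' : Y) - q) ∈ affineSpan ℝ S := by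
    intro t
    have := (affineSpan ℝ S).smul_vsub_vadd_mem t x'.2 hqs x'.2
    simpa [vsub_eq_sub, vadd_eq_add, add_comm] using this
  set f : ℝ → (affineSpan ℝ S : Set Y) := fun t => ⟨(x' : Y) + t • ((x' : Y) - q), hmem t⟩
    with hf_def
  have hfc : Continuous f := by
    apply Continuous.subtype_mk
    continuity
  have hf0 : f 0 = x' := by
    apply Subtype.ext
    simp [hf_def]
  have hnhds : f ⁻¹' (interior (((↑) : (affineSpan ℝ S : Set Y) → Y) ⁻¹' S)) ∈ 𝓝 (0 : ℝ) := by
    apply hfc.continuousAt.preimage_mem_nhds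
    rw [hf0]
    exact isOpen_interior.mem_nhds hx'
  obtain ⟨δ, hδ, hball⟩ := Metric.mem_nhds_iff.1 hnhds
  refine ⟨δ / 2, by linarith, ?_⟩
  have hfδ : f (δ / 2) ∈ interior (((↑) : (affineSpan ℝ S : Set Y) → Y) ⁻¹' S) := by
    apply hball
    simp only [Metric.mem_ball, Real.dist_eq, sub_zero]
    rw [abs_of_pos (by linarith)]
    linarith
  have := interior_subset hfδ
  simpa [hf_def] using this



/-- Hahn–Banach-type extension of a linear minorant dominated by a convex `EReal` function,
under a relative-interior-type "push" condition. -/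
lemma ext_lemma {Y : Type*} [NormedAddCommGroup Y] [InnerProductSpace ℝ Y]
    [FiniteDimensional ℝ Y]
    (F : Y → EReal) (hbot : ∀ u, F u ≠ ⊥)
    (hcvx : ∀ (u₁ u₂ : Y) (a b : ℝ), 0 ≤ a → 0 ≤ b → a + b = 1 →
      F (a • u₁ + b • u₂) ≤ (a : EReal) * F u₁ + (b : EReal) * F u₂)
    (u₀ x₀ : Y) (p₀ : ℝ)
    (hpush : ∀ p : Y, F (u₀ + p) ≠ ⊤ →
      ∃ ε : ℝ, 0 < ε ∧ F (u₀ + (x₀ + ε • (x₀ - p))) ≠ ⊤) :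
    ∀ (k : ℕ) (V : Submodule ℝ Y), Module.finrank ℝ Y ≤ Module.finrank ℝ V + k →
      x₀ ∈ V → ∀ y ∈ V, (∀ v ∈ V, ((p₀ + ⟪y, v⟫ : ℝ) : EReal) ≤ F (u₀ + v)) →
      ∃ yb : Y, yb - y ∈ Vᗮ ∧ ∀ u : Y, ((p₀ + ⟪yb, u - u₀⟫ : ℝ) : EReal) ≤ F u := by
  intro k
  induction k with
  | zero =>
    intro V hrk hx0 y hyV hy
    have hVtop : V = ⊤ :=
      Submodule.eq_top_of_finrank_eq
        (le_antisymm (Submodule.finrank_le V) (by simpa using hrk))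
    refine ⟨y, by simp, fun u => ?_⟩
    have := hy (u - u₀) (by rw [hVtop]; trivial)
    simpa [add_sub_cancel] using this
  | succ k ih =>
    intro V hrk hx0 y hyV hy
    by_cases hVtop : V = ⊤
    · refine ⟨y, by simp, fun u => ?_⟩
      have := hy (u - u₀) (by rw [hVtop]; trivial)
      simpa [add_sub_cancel] using this
    -- pick a unit vector `e` orthogonal to `V`
    have hbotneq : Vᗮ ≠ ⊥ := fun hb => hVtop (Submodule.orthogonal_eq_bot_iff.1 hb)
    obtain ⟨e, heV, henorm⟩ : ∃ e : Y, e ∈ Vᗮ ∧ ‖e‖ = 1 := by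
      obtain ⟨e₀, he₀V, he₀⟩ := Submodule.exists_mem_ne_zero_of_ne_bot hbotneq
      exact ⟨‖e₀‖⁻¹ • e₀, Submodule.smul_mem _ _ he₀V, norm_smul_inv_norm he₀⟩
    have he_ne : e ≠ 0 := fun h0 => by simp [h0] at henorm
    have hee : ⟪e, e⟫ = 1 := by
      rw [real_inner_self_eq_norm_mul_norm, henorm]; norm_num
    have hye : ⟪y, e⟫ = 0 := (Submodule.mem_orthogonal V e).1 heV y hyV
    have heV' : ∀ v ∈ V, ⟪e, v⟫ = 0 := fun v hv => by
      rw [real_inner_comm]; exact (Submodule.mem_orthogonal V e).1 heV v hv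
    set V' := V ⊔ (ℝ ∙ e) with hV'def
    have hVleV' : V ≤ V' := le_sup_left
    have hrk' : Module.finrank ℝ Y ≤ Module.finrank ℝ V' + k := by
      have h1 : Module.finrank ℝ (ℝ ∙ e) = 1 := finrank_span_singleton he_ne
      have hdisj : V ⊓ (ℝ ∙ e) = ⊥ := by
        rw [Submodule.eq_bot_iff]
        rintro v ⟨hv1, hv2⟩
        obtain ⟨a, rfl⟩ := Submodule.mem_span_singleton.1 hv2
        rcases eq_or_ne a 0 with rfl | ha
        · simp
        · exfalso
          have : e ∈ V := by
            have := Submodule.smul_mem V a⁻¹ hv1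
            rwa [smul_smul, inv_mul_cancel₀ ha, one_smul] at this
          have h0 := heV' e this
          rw [hee] at h0; norm_num at h0
      have h2 := Submodule.finrank_sup_add_finrank_inf_eq V (ℝ ∙ e)
      rw [hdisj, h1] at h2
      simp only [finrank_bot, add_zero] at h2
      rw [hV'def]
      omega
    have hdecomp : ∀ v' ∈ V', ∃ v ∈ V, ∃ s : ℝ, v' = v + s • e := by
      intro v' hv'
      obtain ⟨v, hv, w, hw, rfl⟩ := Submodule.mem_sup.1 hv'
      obtain ⟨s, rfl⟩ := Submodule.mem_span_singleton.1 hw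
      exact ⟨v, hv, s, rfl⟩
    -- the set of lower bounds for the new coefficient
    set Sset : Set ℝ := {r | ∃ w ∈ V, ∃ t : ℝ, 0 < t ∧ F (u₀ + (w - t • e)) ≠ ⊤ ∧
        r = (p₀ + ⟪y, w⟫ - (F (u₀ + (w - t • e))).toReal) / t} with hSset_def
    -- the cross inequality
    have cross : ∀ v ∈ V, ∀ s : ℝ, 0 < s → F (u₀ + (v + s • e)) ≠ ⊤ →
        ∀ r ∈ Sset, r ≤ ((F (u₀ + (v + s • e))).toReal - p₀ - ⟪y, v⟫) / s := by
      intro v hv s hs hFs r hr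
      obtain ⟨w, hw, t, ht, hFt, rfl⟩ := hr
      set r₁ := (F (u₀ + (v + s • e))).toReal with hr₁
      set r₂ := (F (u₀ + (w - t • e))).toReal with hr₂
      have hF1 : F (u₀ + (v + s • e)) = (r₁ : EReal) := (EReal.coe_toReal hFs (hbot _)).symm
      have hF2 : F (u₀ + (w - t • e)) = (r₂ : EReal) := (EReal.coe_toReal hFt (hbot _)).symm
      have hst : (0:ℝ) < s + t := by linarith
      have hab : t / (s + t) + s / (s + t) = 1 := by field_simp; ring
      have hcv := hcvx (u₀ + (v + s • e)) (u₀ + (w - t • e)) (t / (s+t)) (s / (s+t))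
        (by positivity) (by positivity) hab
      have hpt : (t / (s+t)) • (u₀ + (v + s • e)) + (s / (s+t)) • (u₀ + (w - t • e))
          = u₀ + ((t / (s+t)) • v + (s / (s+t)) • w) := by
        match_scalars <;> (field_simp; try ring)
      rw [hpt, hF1, hF2, ← EReal.coe_mul, ← EReal.coe_mul, ← EReal.coe_add] at hcv
      have hmV : (t / (s+t)) • v + (s / (s+t)) • w ∈ V :=
        Submodule.add_mem _ (Submodule.smul_mem _ _ hv) (Submodule.smul_mem _ _ hw)
      have hlow := (hy _ hmV).trans hcv
      rw [EReal.coe_le_coe_iff] at hlow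
      rw [inner_add_right, real_inner_smul_right, real_inner_smul_right] at hlow
      rw [div_le_div_iff₀ ht hs]
      have h2 : p₀ * (s + t) + (t * ⟪y, v⟫ + s * ⟪y, w⟫) ≤ t * r₁ + s * r₂ := by
        rw [← sub_nonneg] at hlow ⊢
        have key : t * r₁ + s * r₂ - (p₀ * (s + t) + (t * ⟪y, v⟫ + s * ⟪y, w⟫))
            = (s + t) * ((t / (s+t) * r₁ + s / (s+t) * r₂)
              - (p₀ + (t / (s+t) * ⟪y, v⟫ + s / (s+t) * ⟪y, w⟫))) := by
          field_simp
        rw [key]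
        exact mul_nonneg hst.le hlow
      linarith
    -- transfer of nonemptiness via the push condition
    have transferA : (∃ v ∈ V, ∃ s : ℝ, 0 < s ∧ F (u₀ + (v + s • e)) ≠ ⊤) → Sset.Nonempty := by
      rintro ⟨v, hv, s, hs, hF⟩
      obtain ⟨ε, hε, hFε⟩ := hpush (v + s • e) hF
      have hpt : x₀ + ε • (x₀ - (v + s • e)) = ((1+ε) • x₀ - ε • v) - (ε * s) • e := by
        module
      rw [hpt] at hFε
      exact ⟨_, ⟨(1+ε) • x₀ - ε • v,
        Submodule.sub_mem _ (Submodule.smul_mem _ _ hx0) (Submodule.smul_mem _ _ hv),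
        ε * s, by positivity, hFε, rfl⟩⟩
    have transferB : Sset.Nonempty → (∃ v ∈ V, ∃ s : ℝ, 0 < s ∧ F (u₀ + (v + s • e)) ≠ ⊤) := by
      rintro ⟨r, w, hw, t, ht, hF, rfl⟩
      obtain ⟨ε, hε, hFε⟩ := hpush (w - t • e) hF
      have hpt : x₀ + ε • (x₀ - (w - t • e)) = ((1+ε) • x₀ - ε • w) + (ε * t) • e := by
        module
      rw [hpt] at hFε
      exact ⟨(1+ε) • x₀ - ε • w,
        Submodule.sub_mem _ (Submodule.smul_mem _ _ hx0) (Submodule.smul_mem _ _ hw),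
        ε * t, by positivity, hFε⟩
    -- choose the new coefficient `c`
    have hkey : ∃ c : ℝ, ∀ v ∈ V, ∀ s : ℝ,
        ((p₀ + ⟪y, v⟫ + s * c : ℝ) : EReal) ≤ F (u₀ + (v + s • e)) := by
      by_cases hS : Sset.Nonempty
      · obtain ⟨v₁, hv₁, s₁, hs₁, hF₁⟩ := transferB hS
        have hbdd : BddAbove Sset := ⟨_, fun r hr => cross v₁ hv₁ s₁ hs₁ hF₁ r hr⟩
        refine ⟨sSup Sset, fun v hv s => ?_⟩
        rcases lt_trichotomy s 0 with hneg | rfl | hpos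
        · by_cases hFt : F (u₀ + (v + s • e)) = ⊤
          · rw [hFt]; exact le_top
          · have ht : (0:ℝ) < -s := by linarith
            have hveq : v + s • e = v - (-s) • e := by module
            rw [hveq] at hFt ⊢
            set r₂ := (F (u₀ + (v - (-s) • e))).toReal with hr₂
            have hmem : (p₀ + ⟪y, v⟫ - r₂) / (-s) ∈ Sset := ⟨v, hv, -s, ht, hFt, rfl⟩
            have hcs := le_csSup hbdd hmem
            rw [div_le_iff₀ ht] at hcs
            have hF2 : F (u₀ + (v - (-s) • e)) = (r₂ : EReal) :=
              (EReal.coe_toReal hFt (hbot _)).symm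
            rw [hF2, EReal.coe_le_coe_iff]
            nlinarith
        · have := hy v hv
          simpa using this
        · by_cases hFt : F (u₀ + (v + s • e)) = ⊤
          · rw [hFt]; exact le_top
          · have hcs := csSup_le hS (cross v hv s hpos hFt)
            rw [le_div_iff₀ hpos] at hcs
            have hF1 : F (u₀ + (v + s • e)) = ((F (u₀ + (v + s • e))).toReal : EReal) :=
              (EReal.coe_toReal hFt (hbot _)).symm
            rw [hF1, EReal.coe_le_coe_iff]
            nlinarith
      · refine ⟨0, fun v hv s => ?_⟩
        rcases lt_trichotomy s 0 with hneg | rfl | hpos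
        · by_cases hFt : F (u₀ + (v + s • e)) = ⊤
          · rw [hFt]; exact le_top
          · exfalso
            have ht : (0:ℝ) < -s := by linarith
            have hveq : v + s • e = v - (-s) • e := by module
            rw [hveq] at hFt
            exact hS ⟨_, v, hv, -s, ht, hFt, rfl⟩
        · have := hy v hv
          simpa using this
        · by_cases hFt : F (u₀ + (v + s • e)) = ⊤
          · rw [hFt]; exact le_top
          · exact absurd (transferA ⟨v, hv, s, hpos, hFt⟩) hS
    obtain ⟨c, hc⟩ := hkey
    have hy'V' : y + c • e ∈ V' :=
      Submodule.add_mem _ (hVleV' hyV)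
        (Submodule.mem_sup_right (Submodule.mem_span_singleton.2 ⟨c, rfl⟩))
    have hy' : ∀ v' ∈ V', ((p₀ + ⟪y + c • e, v'⟫ : ℝ) : EReal) ≤ F (u₀ + v') := by
      intro v' hv'
      obtain ⟨v, hv, s, rfl⟩ := hdecomp v' hv'
      have hinner : ⟪y + c • e, v + s • e⟫ = ⟪y, v⟫ + s * c := by
        simp only [inner_add_left, inner_add_right, real_inner_smul_left,
          real_inner_smul_right, hye, heV' v hv, hee]
        ring
      rw [hinner, ← add_assoc]
      exact hc v hv s
    obtain ⟨yb, hybV', hyb⟩ := ih V' hrk' (hVleV' hx0) (y + c • e) hy'V' hy'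
    refine ⟨yb, ?_, hyb⟩
    have h1 : yb - (y + c • e) ∈ Vᗮ := Submodule.orthogonal_le hVleV' hybV'
    have h2 : c • e ∈ Vᗮ := Submodule.smul_mem _ _ heV
    have heq : yb - y = (yb - (y + c • e)) + c • e := by abel
    rw [heq]
    exact Submodule.add_mem _ h1 h2

/-- **Validity of assumption A1 for the dual problem (from the proof of Theorem 4.1).**
If `z̄` minimizes `z ↦ h(z) + P(Mz − b)`, then there is `ȳ ∈ ∂P(Mz̄ − b)` such that,
with `x̄ = ∇h(z̄)`, one has `x̄ + M*ȳ = 0`, `Mz̄ − b ∈ ∂P*(ȳ)` and `z̄ ∈ ∂h*(x̄)`;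
in particular A1 holds for the dual problem with `f = h*`, `g = P* + ⟨b, ·⟩`,
`A = I`, `B = M*`, `c = 0`. -/
theorem stmt_13
    {Z Y : Type*}
    [NormedAddCommGroup Z] [InnerProductSpace ℝ Z] [FiniteDimensional ℝ Z]
    [NormedAddCommGroup Y] [InnerProductSpace ℝ Y] [FiniteDimensional ℝ Y]
    (h : Z → ℝ) (h' : Z → Z)
    (hconv : ConvexOn ℝ Set.univ h)
    (hgrad : ∀ w : Z, HasGradientAt h (h' w) w)
    (L : ℝ) (hL : 0 < L)
    (hlip : ∀ u v : Z, ‖h' u - h' v‖ ≤ L * ‖u - v‖)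
    (P : Y → EReal)
    (hP_ne_bot : ∀ u, P u ≠ ⊥) (hP_proper : ∃ u, P u ≠ ⊤)
    (hP_lsc : LowerSemicontinuous P)
    (hP_cvx : ∀ (u₁ u₂ : Y) (a b : ℝ), 0 ≤ a → 0 ≤ b → a + b = 1 →
      P (a • u₁ + b • u₂) ≤ (a : EReal) * P u₁ + (b : EReal) * P u₂)
    (M : Z →L[ℝ] Y) (hM : M ≠ 0) (b : Y)
    -- constraint qualification: `(Range(M) − b) ∩ ri(dom P) ≠ ∅`
    (hCQ : ∃ w : Z, M w - b ∈ intrinsicInterior ℝ {u : Y | P u ≠ ⊤})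
    (zbar : Z)
    -- `z̄` minimizes `z ↦ h(z) + P(Mz − b)`
    (hmin : ∀ w : Z, (h zbar : EReal) + P (M zbar - b) ≤ (h w : EReal) + P (M w - b)) :
    ∃ ybar : Y,
      IsSubgradAt P ybar (M zbar - b) ∧
      h' zbar + ContinuousLinearMap.adjoint M ybar = 0 ∧
      IsSubgradAt (conj P) (M zbar - b) ybar ∧
      IsSubgradAt (conjR h) zbar (h' zbar) ∧
      -- A1 for the dual problem: `B*z̄ = Mz̄ ∈ ∂(P* + ⟨b, ·⟩)(ȳ)`
      IsSubgradAt (fun w => conj P w + ((⟪b, w⟫ : ℝ) : EReal)) (M zbar) ybar := by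
  classical
  obtain ⟨wcq, hwcq⟩ := hCQ
  set u₀ : Y := M zbar - b with hu₀def
  set xb : Z := h' zbar with hxbdef
  -- `P u₀` is finite
  have hPcq : P (M wcq - b) ≠ ⊤ := intrinsicInterior_subset hwcq
  have hPu₀top : P u₀ ≠ ⊤ := by
    intro htop
    have h1 := hmin wcq
    rw [htop, EReal.add_top_of_ne_bot (EReal.coe_ne_bot _)] at h1
    have h2 : ((h wcq : ℝ) : EReal) + P (M wcq - b) ≠ ⊤ := by
      rw [← EReal.coe_toReal hPcq (hP_ne_bot _), ← EReal.coe_add]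
      exact EReal.coe_ne_top _
    exact h2 (top_le_iff.1 h1)
  set p₀ : ℝ := (P u₀).toReal with hp₀def
  have hP₀ : P u₀ = (p₀ : EReal) := (EReal.coe_toReal hPu₀top (hP_ne_bot _)).symm
  -- Step A: the directional subgradient inequality along the range of `M`
  have stepA : ∀ d : Z, ((p₀ - ⟪xb, d⟫ : ℝ) : EReal) ≤ P (u₀ + M d) := by
    intro d
    by_cases hFt : P (u₀ + M d) = ⊤
    · rw [hFt]; exact le_top
    have hr : P (u₀ + M d) = ((P (u₀ + M d)).toReal : EReal) :=
      (EReal.coe_toReal hFt (hP_ne_bot _)).symm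
    set r : ℝ := (P (u₀ + M d)).toReal with hrdef
    rw [hr, EReal.coe_le_coe_iff]
    have hder : HasDerivAt (fun t : ℝ => -h (zbar + t • d)) (-⟪xb, d⟫) 0 :=
      (dirDeriv h xb zbar d (hgrad zbar)).neg
    have hb : ∀ t : ℝ, 0 < t → t < 1 →
        (-h (zbar + t • d)) - (-h (zbar + (0:ℝ) • d)) ≤ t * (r - p₀) := by
      intro t ht ht1
      have hcomb : M (zbar + t • d) - b = (1 - t) • u₀ + t • (u₀ + M d) := by
        rw [hu₀def, map_add, map_smul]
        module
      have h1 := hP_cvx u₀ (u₀ + M d) (1 - t) t (by linarith) ht.le (by ring)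
      rw [hr, hP₀, ← EReal.coe_mul, ← EReal.coe_mul, ← EReal.coe_add] at h1
      have h2 := hmin (zbar + t • d)
      rw [hP₀, hcomb] at h2
      -- the middle value is finite
      have hmidtop : P ((1 - t) • u₀ + t • (u₀ + M d)) ≠ ⊤ := by
        intro hmid; rw [hmid] at h1; exact (EReal.coe_ne_top _) (top_le_iff.1 h1)
      have hmid : P ((1 - t) • u₀ + t • (u₀ + M d))
          = ((P ((1 - t) • u₀ + t • (u₀ + M d))).toReal : EReal) :=
        (EReal.coe_toReal hmidtop (hP_ne_bot _)).symm
      set q : ℝ := (P ((1 - t) • u₀ + t • (u₀ + M d))).toReal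
      rw [hmid, EReal.coe_le_coe_iff] at h1
      rw [hmid, ← EReal.coe_add, ← EReal.coe_add, EReal.coe_le_coe_iff] at h2
      simp only [zero_smul, add_zero]
      nlinarith
    have := slope_le_of_lin_bound _ _ _ hder hb
    linarith
  -- well-definedness on the kernel
  have hker : ∀ d : Z, M d = 0 → ⟪xb, d⟫ = 0 := by
    intro d hd
    have h1 := stepA d
    have h2 := stepA (-d)
    rw [hd, add_zero, hP₀, EReal.coe_le_coe_iff] at h1
    rw [map_neg, hd, neg_zero, add_zero, hP₀, EReal.coe_le_coe_iff, inner_neg_right] at h2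
    linarith
  -- `-xb` lies in the range of the adjoint
  set Madj : Y →L[ℝ] Z := ContinuousLinearMap.adjoint M with hMadjdef
  set RanAdj : Submodule ℝ Z := LinearMap.range (Madj : Y →ₗ[ℝ] Z) with hRanAdjdef
  have hkerr : ∀ d ∈ RanAdjᗮ, M d = 0 := by
    intro d hd
    have h0 : ⟪Madj (M d), d⟫ = 0 :=
      (Submodule.mem_orthogonal RanAdj d).1 hd _ ⟨M d, rfl⟩
    rw [ContinuousLinearMap.adjoint_inner_left] at h0
    exact inner_self_eq_zero.1 h0
  have hxbmem : -xb ∈ RanAdj := by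
    have horth : RanAdjᗮᗮ = RanAdj := Submodule.orthogonal_orthogonal RanAdj
    rw [← horth]
    rw [Submodule.mem_orthogonal]
    intro v hv
    have := hker v (hkerr v hv)
    rw [inner_neg_right, real_inner_comm, this, neg_zero]
  obtain ⟨y₁, hy₁⟩ := hxbmem
  -- project onto the range of `M`
  set V : Submodule ℝ Y := LinearMap.range (M : Z →ₗ[ℝ] Y) with hVdef
  set y₂ : Y := (V.orthogonalProjectionOnto y₁ : Y) with hy₂def
  have hy₂V : y₂ ∈ V := SetLike.coe_mem _
  have hy₂inner : ∀ d : Z, ⟪y₂, M d⟫ = -⟪xb, d⟫ := by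
    intro d
    have hperp : ⟪y₁ - y₂, M d⟫ = 0 :=
      Submodule.starProjection_inner_eq_zero (K := V) y₁ (M d) ⟨d, rfl⟩
    have hadj : ⟪Madj y₁, d⟫ = ⟪y₁, M d⟫ := ContinuousLinearMap.adjoint_inner_left M d y₁
    rw [show Madj y₁ = -xb from hy₁, inner_neg_left] at hadj
    rw [inner_sub_left] at hperp
    linarith
  have hyV : ∀ v ∈ V, ((p₀ + ⟪y₂, v⟫ : ℝ) : EReal) ≤ P (u₀ + v) := by
    rintro v ⟨d, rfl⟩
    have := stepA d
    simp only [ContinuousLinearMap.coe_coe]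
    rw [hy₂inner d]
    have heq : p₀ + -⟪xb, d⟫ = p₀ - ⟪xb, d⟫ := by ring
    rw [heq]
    exact this
  -- the push property from the constraint qualification
  set x₀ : Y := M wcq - b - u₀ with hx₀def
  have hx₀V : x₀ ∈ V := ⟨wcq - zbar, by rw [map_sub, hx₀def, hu₀def]; abel⟩
  have hpush : ∀ p : Y, P (u₀ + p) ≠ ⊤ →
      ∃ ε : ℝ, 0 < ε ∧ P (u₀ + (x₀ + ε • (x₀ - p))) ≠ ⊤ := by
    intro p hp
    obtain ⟨ε, hε, hmem⟩ := ri_push {u : Y | P u ≠ ⊤} hwcq hp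
    refine ⟨ε, hε, ?_⟩
    have heq : u₀ + (x₀ + ε • (x₀ - p)) = (M wcq - b) + ε • ((M wcq - b) - (u₀ + p)) := by
      rw [hx₀def]; module
    rw [heq]
    exact hmem
  -- apply the extension lemma
  obtain ⟨yb, hybperp, hyb⟩ := ext_lemma P hP_ne_bot hP_cvx u₀ x₀ p₀ hpush
    (Module.finrank ℝ Y) V (Nat.le_add_left _ _) hx₀V y₂ hy₂V hyV
  refine ⟨yb, ?_, ?_, ?_, ?_, ?_⟩
  -- bullet 1
  · intro u
    rw [hP₀, ← EReal.coe_add]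
    exact hyb u
  -- bullet 2
  · have hybinner : ∀ d : Z, ⟪yb, M d⟫ = -⟪xb, d⟫ := by
      intro d
      have h0 : ⟪M d, yb - y₂⟫ = 0 :=
        (Submodule.mem_orthogonal V (yb - y₂)).1 hybperp _ ⟨d, rfl⟩
      rw [real_inner_comm, inner_sub_left] at h0
      have := hy₂inner d
      linarith
    have hMadjyb : Madj yb = -xb := by
      apply ext_inner_right ℝ
      intro d
      rw [ContinuousLinearMap.adjoint_inner_left, hybinner d, inner_neg_left]
    rw [hMadjyb]
    abel
  -- conjugate value
  · have hconjval : conj P yb = ((⟪yb, u₀⟫ - p₀ : ℝ) : EReal) := by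
      apply le_antisymm
      · apply iSup_le
        intro u
        by_cases hu : P u = ⊤
        · rw [hu, EReal.sub_top]; exact bot_le
        · rw [← EReal.coe_toReal hu (hP_ne_bot u), ← EReal.coe_sub, EReal.coe_le_coe_iff]
          have := hyb u
          rw [← EReal.coe_toReal hu (hP_ne_bot u), EReal.coe_le_coe_iff] at this
          have h0 : ⟪yb, u - u₀⟫ = ⟪yb, u⟫ - ⟪yb, u₀⟫ := inner_sub_right _ _ _
          linarith
      · refine le_iSup_of_le u₀ (le_of_eq ?_)
        rw [hP₀, ← EReal.coe_sub]
    intro u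
    rw [hconjval, ← EReal.coe_add]
    have hterm : ((⟪u, u₀⟫ - p₀ : ℝ) : EReal) ≤ conj P u :=
      le_iSup_of_le u₀ (by rw [hP₀, ← EReal.coe_sub])
    refine le_trans (EReal.coe_le_coe_iff.2 (le_of_eq ?_)) hterm
    have h0 : ⟪u₀, u - yb⟫ = ⟪u₀, u⟫ - ⟪u₀, yb⟫ := inner_sub_right _ _ _
    have h1 : ⟪u₀, u⟫ = ⟪u, u₀⟫ := real_inner_comm _ _
    have h2 : ⟪u₀, yb⟫ = ⟪yb, u₀⟫ := real_inner_comm _ _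
    linarith
  -- bullet 4 : `zbar ∈ ∂h*(xb)`
  · have hgradineq : ∀ u : Z, h zbar + ⟪xb, u - zbar⟫ ≤ h u := by
      intro u
      have hder : HasDerivAt (fun t : ℝ => h (zbar + t • (u - zbar))) ⟪xb, u - zbar⟫ 0 :=
        dirDeriv h xb zbar (u - zbar) (hgrad zbar)
      have hb : ∀ t : ℝ, 0 < t → t < 1 →
          h (zbar + t • (u - zbar)) - h (zbar + (0:ℝ) • (u - zbar)) ≤ t * (h u - h zbar) := by
        intro t ht ht1
        have hcomb : zbar + t • (u - zbar) = (1 - t) • zbar + t • u := by module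
        have := hconv.2 (Set.mem_univ zbar) (Set.mem_univ u) (by linarith : (0:ℝ) ≤ 1 - t)
          ht.le (by ring)
        rw [← hcomb] at this
        simp only [zero_smul, add_zero, smul_eq_mul] at this ⊢
        nlinarith
      have := slope_le_of_lin_bound _ _ _ hder hb
      linarith
    have hconjRval : conjR h xb = ((⟪xb, zbar⟫ - h zbar : ℝ) : EReal) := by
      apply le_antisymm
      · apply iSup_le
        intro u
        rw [EReal.coe_le_coe_iff]
        have := hgradineq u
        have h0 : ⟪xb, u - zbar⟫ = ⟪xb, u⟫ - ⟪xb, zbar⟫ := inner_sub_right _ _ _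
        linarith
      · exact le_iSup_of_le zbar (le_refl _)
    intro u
    rw [hconjRval, ← EReal.coe_add]
    have hterm : ((⟪u, zbar⟫ - h zbar : ℝ) : EReal) ≤ conjR h u := le_iSup_of_le zbar (le_refl _)
    refine le_trans (EReal.coe_le_coe_iff.2 (le_of_eq ?_)) hterm
    have h0 : ⟪zbar, u - xb⟫ = ⟪zbar, u⟫ - ⟪zbar, xb⟫ := inner_sub_right _ _ _
    have h1 : ⟪zbar, u⟫ = ⟪u, zbar⟫ := real_inner_comm _ _
    have h2 : ⟪zbar, xb⟫ = ⟪xb, zbar⟫ := real_inner_comm _ _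
    linarith
  -- bullet 5
  · have hconjval : conj P yb = ((⟪yb, u₀⟫ - p₀ : ℝ) : EReal) := by
      apply le_antisymm
      · apply iSup_le
        intro u
        by_cases hu : P u = ⊤
        · rw [hu, EReal.sub_top]; exact bot_le
        · rw [← EReal.coe_toReal hu (hP_ne_bot u), ← EReal.coe_sub, EReal.coe_le_coe_iff]
          have := hyb u
          rw [← EReal.coe_toReal hu (hP_ne_bot u), EReal.coe_le_coe_iff] at this
          have h0 : ⟪yb, u - u₀⟫ = ⟪yb, u⟫ - ⟪yb, u₀⟫ := inner_sub_right _ _ _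
          linarith
      · refine le_iSup_of_le u₀ (le_of_eq ?_)
        rw [hP₀, ← EReal.coe_sub]
    intro u
    simp only
    rw [hconjval, ← EReal.coe_add, ← EReal.coe_add]
    have hterm : ((⟪u, u₀⟫ - p₀ + ⟪b, u⟫ : ℝ) : EReal) ≤ conj P u + ((⟪b, u⟫ : ℝ) : EReal) := by
      rw [EReal.coe_add]
      apply add_le_add_left
      exact le_iSup_of_le u₀ (by rw [hP₀, ← EReal.coe_sub])
    refine le_trans (EReal.coe_le_coe_iff.2 (le_of_eq ?_)) hterm
    have h1 : ⟪yb, u₀⟫ = ⟪yb, M zbar⟫ - ⟪yb, b⟫ := by rw [hu₀def, inner_sub_right]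
    have h2 : ⟪u, u₀⟫ = ⟪u, M zbar⟫ - ⟪u, b⟫ := by rw [hu₀def, inner_sub_right]
    have h3 : ⟪b, yb⟫ = ⟪yb, b⟫ := real_inner_comm _ _
    have h4 : ⟪M zbar, u - yb⟫ = ⟪M zbar, u⟫ - ⟪M zbar, yb⟫ := inner_sub_right _ _ _
    have h5 : ⟪M zbar, u⟫ = ⟪u, M zbar⟫ := real_inner_comm _ _
    have h6 : ⟪M zbar, yb⟫ = ⟪yb, M zbar⟫ := real_inner_comm _ _
    have h7 : ⟪b, u⟫ = ⟪u, b⟫ := real_inner_comm _ _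
    linarith
end

section
/- Let {(y^t, z^t)} be generated by the PPG algorithm for min_z h(z) + P(Mz − b) with parameters β > 0, γ = 1, τ ≥ β‖M*M‖ and T = τI − βMM*. Then for every t ≥ 0, y^{t+1} ∈ ∂P( M z^{t+1} − b − T(y^{t+1} − y^t) ). -/
open RealInnerProductSpace Filter Topology

set_option maxHeartbeats 1000000 in
theorem lsc_exists_min {α : Type*} [TopologicalSpace α] {S : Set α} (hS : IsCompact S)
    (hne : S.Nonempty) {f : α → EReal} (hf : LowerSemicontinuous f) :
    ∃ x ∈ S, ∀ y ∈ S, f x ≤ f y := by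
  by_contra hcon
  push_neg at hcon
  choose Φ hΦS hΦlt using hcon
  set U : S → Set α := fun x => f ⁻¹' Set.Ioi (f (Φ x x.2)) with hU
  have hopen : ∀ x : S, IsOpen (U x) := fun x => hf.isOpen_preimage _
  have hcover : S ⊆ ⋃ x : S, U x := fun y hy => Set.mem_iUnion.2 ⟨⟨y, hy⟩, hΦlt y hy⟩
  obtain ⟨t, ht⟩ := hS.elim_finite_subcover U hopen hcover
  obtain ⟨y0, hy0⟩ := hne
  obtain ⟨i, hit, -⟩ := Set.mem_iUnion₂.1 (ht hy0)
  obtain ⟨i₀, hi₀t, hi₀min⟩ := t.exists_min_image (fun x => f (Φ x x.2)) ⟨i, hit⟩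
  have hyS : (Φ i₀ i₀.2) ∈ S := hΦS _ _
  obtain ⟨j, hjt, hjU⟩ := Set.mem_iUnion₂.1 (ht hyS)
  have h1 : f (Φ j j.2) < f (Φ i₀ i₀.2) := hjU
  exact absurd (lt_of_lt_of_le h1 (hi₀min j hjt)) (lt_irrefl _)

set_option maxHeartbeats 1000000 in
theorem exists_affine_minorant {E : Type*} [NormedAddCommGroup E] [InnerProductSpace ℝ E]
    (P : E → EReal) (hbot : ∀ u, P u ≠ ⊥) (hprop : ∃ u, P u ≠ ⊤)
    (hlsc : LowerSemicontinuous P)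
    (hcvx : ∀ (u₁ u₂ : E) (a b : ℝ), 0 ≤ a → 0 ≤ b → a + b = 1 →
      P (a • u₁ + b • u₂) ≤ (a : EReal) * P u₁ + (b : EReal) * P u₂) :
    ∃ (ψ : E →L[ℝ] ℝ) (c : ℝ), ∀ u, ((ψ u + c : ℝ) : EReal) ≤ P u := by
  obtain ⟨u₀, hu₀⟩ := hprop
  set r₀ : ℝ := (P u₀).toReal with hr₀
  have hPu₀ : P u₀ = (r₀ : EReal) := (EReal.coe_toReal hu₀ (hbot u₀)).symm
  set S : Set (E × ℝ) := {p : E × ℝ | P p.1 ≤ (p.2 : EReal)} with hS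
  -- epigraph is closed
  have hclosed : IsClosed S := by
    rw [hS, ← isOpen_compl_iff, isOpen_iff_mem_nhds]
    rintro ⟨u, r⟩ hp
    simp only [Set.mem_compl_iff, Set.mem_setOf_eq, not_le] at hp
    obtain ⟨c, hc1, hc2⟩ := EReal.exists_between_coe_real hp
    have h1 : ∀ᶠ u' in 𝓝 u, (c : EReal) < P u' := hlsc u c hc2
    have h2 : ∀ᶠ r' in 𝓝 r, r' < c := eventually_lt_nhds (EReal.coe_lt_coe_iff.1 hc1)
    refine Filter.mem_of_superset (h1.prod_nhds h2) ?_
    rintro ⟨u', r'⟩ ⟨ha, hb⟩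
    simp only [Set.mem_compl_iff, Set.mem_setOf_eq, not_le]
    exact lt_trans (EReal.coe_lt_coe_iff.2 hb) ha
  -- epigraph is convex
  have hconv : Convex ℝ S := by
    rintro ⟨u₁, r₁⟩ h₁ ⟨u₂, r₂⟩ h₂ a b ha hb hab
    simp only [hS, Set.mem_setOf_eq] at h₁ h₂ ⊢
    have hp₁ : P u₁ ≠ ⊤ := fun ht => by simp [ht] at h₁
    have hp₂ : P u₂ ≠ ⊤ := fun ht => by simp [ht] at h₂
    have e₁ : P u₁ = ((P u₁).toReal : EReal) := (EReal.coe_toReal hp₁ (hbot u₁)).symm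
    have e₂ : P u₂ = ((P u₂).toReal : EReal) := (EReal.coe_toReal hp₂ (hbot u₂)).symm
    have key := hcvx u₁ u₂ a b ha hb hab
    rw [e₁, e₂] at key
    rw [← EReal.coe_mul, ← EReal.coe_mul, ← EReal.coe_add] at key
    refine le_trans key ?_
    simp only [Prod.fst_add, Prod.snd_add, Prod.smul_mk, smul_eq_mul]
    rw [EReal.coe_le_coe_iff]
    have := EReal.coe_le_coe_iff.1 (e₁ ▸ h₁)
    have := EReal.coe_le_coe_iff.1 (e₂ ▸ h₂)
    have h1' : a * (P u₁).toReal ≤ a * r₁ := by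
      apply mul_le_mul_of_nonneg_left _ ha
      exact EReal.coe_le_coe_iff.1 (e₁ ▸ h₁)
    have h2' : b * (P u₂).toReal ≤ b * r₂ := by
      apply mul_le_mul_of_nonneg_left _ hb
      exact EReal.coe_le_coe_iff.1 (e₂ ▸ h₂)
    linarith
  -- separate the point (u₀, r₀ - 1) from S
  have hx₀ : (u₀, r₀ - 1) ∉ S := by
    simp only [hS, Set.mem_setOf_eq, not_le, hPu₀]
    exact_mod_cast sub_lt_self r₀ one_pos
  obtain ⟨f, d, hfd, hd⟩ := geometric_hahn_banach_point_closed hconv hclosed hx₀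
  -- decompose f
  set φ : E →L[ℝ] ℝ := f.comp (ContinuousLinearMap.inl ℝ E ℝ) with hφ
  set α : ℝ := f (0, 1) with hα
  have hdecomp : ∀ (v : E) (r : ℝ), f (v, r) = φ v + r * α := by
    intro v r
    have : (v, r) = (v, (0 : ℝ)) + r • ((0 : E), (1 : ℝ)) := by
      simp [Prod.ext_iff]
    rw [this, map_add, map_smul]
    simp [hφ, ContinuousLinearMap.inl_apply, smul_eq_mul]
    exact Or.inl hα.symm
  have hmemS : ∀ (v : E) (r : ℝ), P v ≤ (r : EReal) → d < φ v + r * α := by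
    intro v r hvr
    have := hd (v, r) hvr
    rwa [hdecomp] at this
  -- α ≥ 0
  have hα_nonneg : 0 ≤ α := by
    by_contra hneg
    push_neg at hneg
    obtain ⟨n, hn⟩ := exists_nat_gt ((φ u₀ + r₀ * α - d) / (-α))
    have hmem : P u₀ ≤ ((r₀ + n : ℝ) : EReal) := by
      rw [hPu₀]; exact_mod_cast by linarith [n.cast_nonneg (α := ℝ)]
    have := hmemS u₀ (r₀ + n) hmem
    have h2 : (φ u₀ + r₀ * α - d) < n * (-α) := by
      rw [div_lt_iff₀ (by linarith)] at hn; linarith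
    nlinarith
  -- α ≠ 0
  have hα_pos : 0 < α := by
    rcases lt_or_eq_of_le hα_nonneg with h | h
    · exact h
    · exfalso
      have h1 := hmemS u₀ r₀ (le_of_eq hPu₀)
      have h2 : f (u₀, r₀ - 1) < d := hfd
      rw [hdecomp] at h2
      rw [← h] at h1 h2
      simp at h1 h2
      linarith
  -- build the minorant
  refine ⟨-(α⁻¹ • φ), d / α, fun u => ?_⟩
  by_cases hu : P u = ⊤
  · rw [hu]; exact le_top
  · have e : P u = ((P u).toReal : EReal) := (EReal.coe_toReal hu (hbot u)).symm
    rw [e, EReal.coe_le_coe_iff]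
    have := hmemS u (P u).toReal (le_of_eq e)
    simp only [ContinuousLinearMap.neg_apply, ContinuousLinearMap.coe_smul',
      Pi.smul_apply, smul_eq_mul]
    have hinv : α * α⁻¹ = 1 := mul_inv_cancel₀ (ne_of_gt hα_pos)
    have hd2 : d / α = d * α⁻¹ := div_eq_mul_inv d α
    have h4 := mul_lt_mul_of_pos_right this (inv_pos.2 hα_pos)
    have h5 : (P u).toReal * (α * α⁻¹) = (P u).toReal := by rw [hinv, mul_one]
    nlinarith [h4, h5]

set_option maxHeartbeats 1000000 in
theorem exists_prox_subgrad {E : Type*} [NormedAddCommGroup E] [InnerProductSpace ℝ E]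
    [FiniteDimensional ℝ E]
    (P : E → EReal) (hbot : ∀ u, P u ≠ ⊥) (hprop : ∃ u, P u ≠ ⊤)
    (hlsc : LowerSemicontinuous P)
    (hcvx : ∀ (u₁ u₂ : E) (a b : ℝ), 0 ≤ a → 0 ≤ b → a + b = 1 →
      P (a • u₁ + b • u₂) ≤ (a : EReal) * P u₁ + (b : EReal) * P u₂)
    {τ : ℝ} (hτ : 0 < τ) (a : E) :
    ∃ (x : E) (px : ℝ), P x = (px : EReal) ∧ IsSubgradAt P (τ⁻¹ • (a - x)) x := by
  obtain ⟨ψ, c, hmino⟩ := exists_affine_minorant P hbot hprop hlsc hcvx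
  obtain ⟨u₀, hu₀⟩ := hprop
  set r₀ : ℝ := (P u₀).toReal with hr₀
  have hPu₀ : P u₀ = (r₀ : EReal) := (EReal.coe_toReal hu₀ (hbot u₀)).symm
  set k : ℝ := 1 / (2 * τ) with hk
  have hkpos : 0 < k := by positivity
  set q : E → ℝ := fun v => k * ‖v - a‖ ^ 2 with hq
  set G : ℝ := r₀ + q u₀ with hG
  set g : E → EReal := fun v => P v + ((q v : ℝ) : EReal) with hg
  -- coercivity radius
  have hcoer : Tendsto (fun r : ℝ => (r - ‖a‖) * (k * (r - ‖a‖) - ‖ψ‖) + (c - ‖ψ‖ * ‖a‖))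
      atTop atTop := by
    apply tendsto_atTop_add_const_right
    apply Filter.Tendsto.atTop_mul_atTop₀
    · exact tendsto_atTop_add_const_right _ _ tendsto_id
    · exact tendsto_atTop_add_const_right _ _
        ((tendsto_atTop_add_const_right _ _ tendsto_id).const_mul_atTop hkpos)
  obtain ⟨R, hR⟩ := eventually_atTop.1 (hcoer.eventually_gt_atTop G)
  set R' : ℝ := max R ‖u₀‖ with hR'
  -- lower bound off the ball
  have hlb : ∀ v : E, R ≤ ‖v‖ → (G : EReal) < g v := by
    intro v hv
    have h1 : G < (‖v‖ - ‖a‖) * (k * (‖v‖ - ‖a‖) - ‖ψ‖) + (c - ‖ψ‖ * ‖a‖) := hR ‖v‖ hv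
    have h2 : -(‖ψ‖ * ‖v‖) ≤ ψ v := by
      have := ψ.le_opNorm v
      rw [Real.norm_eq_abs] at this
      linarith [neg_abs_le (ψ v)]
    have h3 : (‖v‖ - ‖a‖) ^ 2 ≤ ‖v - a‖ ^ 2 := by
      have h := abs_norm_sub_norm_le v a
      nlinarith [abs_nonneg (‖v‖ - ‖a‖), neg_abs_le (‖v‖ - ‖a‖), le_abs_self (‖v‖ - ‖a‖)]
    have hqv : q v = k * ‖v - a‖ ^ 2 := rfl
    have h4 : G < ψ v + c + q v := by
      rw [hqv]; nlinarith [mul_le_mul_of_nonneg_left h3 hkpos.le]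
    have h5 : ((ψ v + c : ℝ) : EReal) + ((q v : ℝ) : EReal) ≤ g v :=
      add_le_add_left (hmino v) _
    calc (G : EReal) < ((ψ v + c + q v : ℝ) : EReal) := EReal.coe_lt_coe_iff.2 h4
    _ = ((ψ v + c : ℝ) : EReal) + ((q v : ℝ) : EReal) := by rw [← EReal.coe_add]
    _ ≤ g v := h5
  -- minimize on the compact ball
  have hgls : LowerSemicontinuous g := by
    apply hlsc.add'
    · exact (continuous_coe_real_ereal.comp (by fun_prop)).lowerSemicontinuous
    · intro x
      exact EReal.continuousAt_add (Or.inr (EReal.coe_ne_bot _)) (Or.inr (EReal.coe_ne_top _))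
  have hu₀mem : u₀ ∈ Metric.closedBall (0 : E) R' := by
    simp [Metric.mem_closedBall, dist_zero_right, hR', le_max_right]
  obtain ⟨x, hxS, hxmin⟩ := lsc_exists_min (isCompact_closedBall (0 : E) R') ⟨u₀, hu₀mem⟩ hgls
  have hgu₀ : g u₀ = (G : EReal) := by
    rw [hg]; simp only [hPu₀, hG, ← EReal.coe_add]
  -- global minimality
  have hglobal : ∀ v, g x ≤ g v := by
    intro v
    by_cases hv : v ∈ Metric.closedBall (0 : E) R'
    · exact hxmin v hv
    · have hvR : R ≤ ‖v‖ := by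
        simp only [Metric.mem_closedBall, dist_zero_right, not_le] at hv
        exact le_of_lt (lt_of_le_of_lt (le_max_left _ _) hv)
      exact le_of_lt (lt_of_le_of_lt (hgu₀ ▸ hxmin u₀ hu₀mem) (hlb v hvR))
  have hgxle : g x ≤ (G : EReal) := hgu₀ ▸ hxmin u₀ hu₀mem
  have hPx_ne_top : P x ≠ ⊤ := by
    intro htop
    have : g x = ⊤ := by rw [hg]; simp [htop]
    rw [this] at hgxle
    exact absurd (lt_of_le_of_lt hgxle (EReal.coe_lt_top G)) (lt_irrefl _)
  set px : ℝ := (P x).toReal with hpx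
  have hPx : P x = (px : EReal) := (EReal.coe_toReal hPx_ne_top (hbot x)).symm
  refine ⟨x, px, hPx, ?_⟩
  intro u
  by_cases hu : P u = ⊤
  · rw [hu]; exact le_top
  · set pu : ℝ := (P u).toReal with hpu
    have hPu : P u = (pu : EReal) := (EReal.coe_toReal hu (hbot u)).symm
    set C : ℝ := ⟪x - a, u - x⟫ with hC
    set N : ℝ := ‖u - x‖ ^ 2 with hN
    have key : ∀ s : ℝ, 0 < s → s ≤ 1 → px + τ⁻¹ * ⟪a - x, u - x⟫ ≤ pu + s * (k * N) := by
      intro s hs hs1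
      have hcom : (1 - s) • x + s • u = x + s • (u - x) := by module
      have hcv := hcvx x u (1 - s) s (by linarith) hs.le (by ring)
      rw [hcom, hPx, hPu, ← EReal.coe_mul, ← EReal.coe_mul, ← EReal.coe_add] at hcv
      have hm := hglobal (x + s • (u - x))
      have hch : g x ≤ (((1 - s) * px + s * pu : ℝ) : EReal) + ((q (x + s • (u - x)) : ℝ) : EReal) :=
        le_trans hm (add_le_add_left hcv _)
      rw [hg] at hch
      simp only [hPx, ← EReal.coe_add] at hch
      have hreal := EReal.coe_le_coe_iff.1 hch
      have hqx : ‖x + s • (u - x) - a‖ ^ 2 = ‖x - a‖ ^ 2 + 2 * (s * C) + s ^ 2 * N := by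
        have hre : x + s • (u - x) - a = (x - a) + s • (u - x) := by module
        rw [hre, norm_add_sq_real, real_inner_smul_right, norm_smul, Real.norm_eq_abs,
          mul_pow, sq_abs, hC, hN]
      have hinner : ⟪a - x, u - x⟫ = -C := by
        rw [hC, ← inner_neg_left]; congr 1; module
      have hqexp : q (x + s • (u - x)) = q x + k * (2 * (s * C) + s ^ 2 * N) := by
        rw [hq]; simp only []; rw [hqx]; ring
      rw [hqexp] at hreal
      have hIk : τ⁻¹ = 2 * k := by rw [hk]; field_simp
      rw [hinner, hIk]
      have hsmul : s * (px + 2 * k * (-C)) ≤ s * (pu + s * (k * N)) := by nlinarith [hreal]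
      have hfin := le_of_mul_le_mul_left hsmul hs
      linarith
    rw [hPx, hPu, real_inner_smul_left, ← EReal.coe_add, EReal.coe_le_coe_iff]
    apply le_of_forall_pos_le_add
    intro ε hε
    have hN0 : 0 ≤ N := by rw [hN]; positivity
    have hkN0 : 0 ≤ k * N := mul_nonneg hkpos.le hN0
    set s : ℝ := min 1 (ε / (k * N + 1)) with hs
    have hs0 : 0 < s := lt_min one_pos (div_pos hε (by linarith))
    have hs1 : s ≤ 1 := min_le_left _ _
    have hkey := key s hs0 hs1
    have hD : ∀ D : ℝ, 0 ≤ D → ε / (D + 1) * D ≤ ε := by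
      intro D hD
      rw [div_mul_eq_mul_div, div_le_iff₀ (by linarith)]
      nlinarith
    have hfin : s * (k * N) ≤ ε := by
      have h1 : s ≤ ε / (k * N + 1) := min_le_right _ _
      have h2 := mul_le_mul_of_nonneg_right h1 hkN0
      exact le_trans h2 (hD _ hkN0)
    linarith

set_option maxHeartbeats 1000000 in
/-- **Subgradient property of the PPG iterates when `γ = 1` ((domP) in Remark 4.1).**
For the PPG algorithm with `γ = 1`, every iterate satisfies
`y^{t+1} ∈ ∂P(Mz^{t+1} − b − T(y^{t+1} − y^t))`, where `T = τI − βMM*`. -/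
theorem stmt_15
    {Z Y : Type*}
    [NormedAddCommGroup Z] [InnerProductSpace ℝ Z] [FiniteDimensional ℝ Z]
    [NormedAddCommGroup Y] [InnerProductSpace ℝ Y] [FiniteDimensional ℝ Y]
    (h : Z → ℝ) (h' : Z → Z)
    (hconv : ConvexOn ℝ Set.univ h)
    (hgrad : ∀ w : Z, HasGradientAt h (h' w) w)
    (L : ℝ) (hL : 0 < L)
    (hlip : ∀ u v : Z, ‖h' u - h' v‖ ≤ L * ‖u - v‖)
    (P : Y → EReal)
    (hP_ne_bot : ∀ u, P u ≠ ⊥) (hP_proper : ∃ u, P u ≠ ⊤)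
    (hP_lsc : LowerSemicontinuous P)
    (hP_cvx : ∀ (u₁ u₂ : Y) (a b : ℝ), 0 ≤ a → 0 ≤ b → a + b = 1 →
      P (a • u₁ + b • u₂) ≤ (a : EReal) * P u₁ + (b : EReal) * P u₂)
    (M : Z →L[ℝ] Y) (hM : M ≠ 0) (b : Y)
    (β τ : ℝ) (hβ : 0 < β)
    (hτ : β * ‖(ContinuousLinearMap.adjoint M).comp M‖ ≤ τ)
    (y : ℕ → Y) (z : ℕ → Z)
    -- the PPG iterations with `γ = 1`
    (hy : ∀ (t : ℕ) (u : Y),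
      conj P (y (t+1)) + ((τ / 2 * ‖y (t+1) -
          τ⁻¹ • (τ • y t - β • M (ContinuousLinearMap.adjoint M (y t)) - b
            + M (z t) - β • M (h' (z t)))‖ ^ 2 : ℝ) : EReal)
        ≤ conj P u + ((τ / 2 * ‖u -
          τ⁻¹ • (τ • y t - β • M (ContinuousLinearMap.adjoint M (y t)) - b
            + M (z t) - β • M (h' (z t)))‖ ^ 2 : ℝ) : EReal))
    (hz : ∀ t : ℕ, z (t+1) = z t - β • (h' (z t) + ContinuousLinearMap.adjoint M (y (t+1)))) :
    ∀ t : ℕ,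
      IsSubgradAt P (y (t+1))
        (M (z (t+1)) - b - (τ • (y (t+1) - y t)
          - β • M (ContinuousLinearMap.adjoint M (y (t+1) - y t)))) := by
  intro t
  -- τ is positive
  have hMM : (ContinuousLinearMap.adjoint M).comp M ≠ 0 := by
    intro h0
    apply hM
    ext zz
    have h1 : ⟪(ContinuousLinearMap.adjoint M) (M zz), zz⟫ = ⟪M zz, M zz⟫ :=
      ContinuousLinearMap.adjoint_inner_left M zz (M zz)
    have h2 : (ContinuousLinearMap.adjoint M) (M zz) = 0 := by
      have h3 := ContinuousLinearMap.ext_iff.1 h0 zz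
      simpa using h3
    rw [h2] at h1
    simp only [inner_zero_left] at h1
    have : ‖M zz‖ = 0 := by
      have := real_inner_self_eq_norm_sq (M zz)
      nlinarith [norm_nonneg (M zz)]
    simpa [norm_eq_zero] using this
  have hτ0 : 0 < τ := lt_of_lt_of_le (mul_pos hβ (norm_pos_iff.mpr hMM)) hτ
  have hτne : τ ≠ 0 := ne_of_gt hτ0
  set W : Y := τ • y t - β • M (ContinuousLinearMap.adjoint M (y t)) - b
      + M (z t) - β • M (h' (z t)) with hW
  set w : Y := τ⁻¹ • W with hw
  obtain ⟨x, px, hPx, hsub⟩ := exists_prox_subgrad P hP_ne_bot hP_proper hP_lsc hP_cvx hτ0 W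
  set ub : Y := τ⁻¹ • (W - x) with hub
  set yb : Y := y (t + 1) with hyb
  have hτub : τ • ub = W - x := by rw [hub, smul_smul, mul_inv_cancel₀ hτne, one_smul]
  have hτw : τ • w = W := by rw [hw, smul_smul, mul_inv_cancel₀ hτne, one_smul]
  have hxw : x = τ • w - τ • ub := by rw [hτw, hτub]; abel
  -- conj value at ub
  have hconj_ub_le : conj P ub ≤ ((⟪ub, x⟫ - px : ℝ) : EReal) := by
    apply iSup_le
    intro u
    by_cases hu : P u = ⊤
    · rw [hu, EReal.sub_top]; exact bot_le
    · have hPu : P u = ((P u).toReal : EReal) := (EReal.coe_toReal hu (hP_ne_bot u)).symm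
      rw [hPu, ← EReal.coe_sub, EReal.coe_le_coe_iff]
      have hs := hsub u
      rw [hPx, ← EReal.coe_add, hPu, EReal.coe_le_coe_iff] at hs
      rw [inner_sub_right] at hs
      linarith
  have hconj_ub_ge : ((⟪ub, x⟫ - px : ℝ) : EReal) ≤ conj P ub := by
    have hle := le_iSup (fun u => ((⟪ub, u⟫ : ℝ) : EReal) - P u) x
    rwa [hPx, ← EReal.coe_sub] at hle
  have hconj_ub : conj P ub = ((⟪ub, x⟫ - px : ℝ) : EReal) :=
    le_antisymm hconj_ub_le hconj_ub_ge
  -- strong convexity inequality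
  have hD : ∀ v : Y, ((⟪ub, x⟫ - px + τ / 2 * ‖ub - w‖ ^ 2 + τ / 2 * ‖v - ub‖ ^ 2 : ℝ) : EReal)
      ≤ conj P v + ((τ / 2 * ‖v - w‖ ^ 2 : ℝ) : EReal) := by
    intro v
    have hlow : ((⟪v, x⟫ - px : ℝ) : EReal) ≤ conj P v := by
      have hle := le_iSup (fun u => ((⟪v, u⟫ : ℝ) : EReal) - P u) x
      rwa [hPx, ← EReal.coe_sub] at hle
    calc ((⟪ub, x⟫ - px + τ / 2 * ‖ub - w‖ ^ 2 + τ / 2 * ‖v - ub‖ ^ 2 : ℝ) : EReal)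
        ≤ ((⟪v, x⟫ - px : ℝ) : EReal) + ((τ / 2 * ‖v - w‖ ^ 2 : ℝ) : EReal) := by
          rw [← EReal.coe_add, EReal.coe_le_coe_iff]
          rw [hxw]
          simp only [inner_sub_right, real_inner_smul_right, norm_sub_sq_real,
            real_inner_self_eq_norm_sq]
          ring_nf
          nlinarith [real_inner_comm v ub, real_inner_comm v w, real_inner_comm ub w]
      _ ≤ conj P v + ((τ / 2 * ‖v - w‖ ^ 2 : ℝ) : EReal) := add_le_add_left hlow _
  -- uniqueness: yb = ub
  have hy' := hy t ub
  rw [← hyb, ← hW, ← hw] at hy'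
  have hchain := le_trans (hD yb) (le_trans hy'
    (le_of_eq (by rw [hconj_ub, ← EReal.coe_add])))
  rw [EReal.coe_le_coe_iff] at hchain
  have hsq : τ / 2 * ‖yb - ub‖ ^ 2 ≤ 0 := by linarith
  have hsq2 : ‖yb - ub‖ ^ 2 ≤ 0 := by nlinarith [hsq, hτ0]
  have hsq3 : ‖yb - ub‖ ^ 2 = 0 := le_antisymm hsq2 (sq_nonneg _)
  have hnorm0 : ‖yb - ub‖ = 0 := (pow_eq_zero_iff (by norm_num : (2:ℕ) ≠ 0)).1 hsq3
  have hyu : yb = ub := by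
    rw [← sub_eq_zero]; exact norm_eq_zero.mp hnorm0
  -- the target point equals x
  have htar : M (z (t + 1)) - b - (τ • (yb - y t)
      - β • M (ContinuousLinearMap.adjoint M (yb - y t))) = x := by
    have hx2 : x = W - τ • yb := by rw [hyu, hτub]; abel
    rw [hz t, hx2, hW]
    simp only [map_sub, map_add, map_smul, smul_sub, smul_add]
    module
  rw [htar, hyu]
  exact hsub
end
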